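/- arXiv:1102.4869 — 4 statements merged into one kernel-verified Lean document; each statement's English description precedes it below -/
import Mathlib

section
/- Let A be the Fell C*-algebra of a continuous Hilbert bundle over a locally compact Hausdorff space T. For essential ideals I ⊆ J of A, define π_{JI}: A^J → A^I by π_{JI}(a)(t) = Ψ_{JIt} a(Φ_{JI}(t)) Ψ_{JIt}^{-1} for t ∈ βX^I. Then π_{JI}(a) ∈ A^I for every a ∈ A^J, π_{JI} is an isometric *-monomorphism, ({A^I}, {π_{JI}}) is a direct system of C*-algebras and monomorphisms (π_{II} = id and π_{KI} = π_{JI} ∘ π_{KJ} for I ⊆ J ⊆ K), and δ_I = π_{JI} ∘ (δ_J restricted to I) for all essential ideals I ⊆ J. -/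
/- Common definitions: continuous Hilbert bundles and Fell (spatial continuous
trace) C*-algebras, following Fell (1961). -/

noncomputable section

/-- A vector field `ξ` is a local uniform limit of members of `S`. -/
def LocUnifApprox {T : Type*} [TopologicalSpace T] {H : T → Type*}
    [∀ t, NormedAddCommGroup (H t)] (S : Set (∀ t, H t)) (ξ : ∀ t, H t) : Prop :=
  ∀ (t₀ : T) (ε : ℝ), 0 < ε → ∃ U : Set T, IsOpen U ∧ t₀ ∈ U ∧
    ∃ ω ∈ S, ∀ t ∈ U, ‖ω t - ξ t‖ < ε

/-- Axioms (I)-(IV) of a continuous Hilbert bundle `(T, {H t}, Ω)`. -/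
structure IsCtsHilbertBundle {T : Type*} [TopologicalSpace T] {H : T → Type*}
    [∀ t, NormedAddCommGroup (H t)] [∀ t, InnerProductSpace ℂ (H t)]
    (Ω : Set (∀ t, H t)) : Prop where
  /-- axiom (I): `Ω` is a `C(T)`-module (additive part) -/
  zero_mem : (fun t => (0 : H t)) ∈ Ω
  add_mem : ∀ ω ∈ Ω, ∀ ν ∈ Ω, (fun t => ω t + ν t) ∈ Ω
  /-- axiom (I): `C(T)`-action -/
  smul_mem : ∀ (f : C(T, ℂ)), ∀ ω ∈ Ω, (fun t => f t • ω t) ∈ Ω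
  /-- axiom (II) -/
  full : ∀ (t : T) (v : H t), ∃ ω ∈ Ω, ω t = v
  /-- axiom (III) -/
  norm_continuous : ∀ ω ∈ Ω, Continuous fun t => ‖ω t‖
  /-- axiom (IV) -/
  closed_locUnif : ∀ ξ : ∀ t, H t, LocUnifApprox Ω ξ → ξ ∈ Ω

variable {T : Type*} [TopologicalSpace T] {H : T → Type*}
  [∀ t, NormedAddCommGroup (H t)] [∀ t, InnerProductSpace ℂ (H t)]
  [∀ t, CompleteSpace (H t)]

/-- An operator field is weakly continuous w.r.t. the bundle `Ω`. -/
def WeaklyCts (Ω : Set (∀ t, H t)) (a : ∀ t, H t →L[ℂ] H t) : Prop :=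
  ∀ ω₁ ∈ Ω, ∀ ω₂ ∈ Ω, Continuous fun t => (inner ℂ (a t (ω₁ t)) (ω₂ t) : ℂ)

/-- An operator field is almost finite-dimensional w.r.t. the bundle `Ω`. -/
def AlmostFinDim (Ω : Set (∀ t, H t)) (a : ∀ t, H t →L[ℂ] H t) : Prop :=
  ∀ (t₀ : T) (ε : ℝ), 0 < ε → ∃ U : Set T, IsOpen U ∧ t₀ ∈ U ∧
    ∃ (n : ℕ) (ω : Fin n → ∀ t, H t), (∀ i, ω i ∈ Ω) ∧ ∀ t ∈ U,
      LinearIndependent ℂ (fun i => ω i t) ∧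
      ∃ p : H t →L[ℂ] H t, IsIdempotentElem p ∧ IsSelfAdjoint p ∧
        LinearMap.range (p : H t →ₗ[ℂ] H t) = Submodule.span ℂ (Set.range fun i => ω i t) ∧
        ‖p * a t * p - a t‖ < ε

/-- The Fell (spatial continuous-trace) C*-algebra `A(T, {H t}, Ω)`: all weakly
continuous, almost finite-dimensional operator fields whose pointwise norm
function lies in `C₀(T)`; a set of operator fields with pointwise operations. -/
def FellAlgebra (Ω : Set (∀ t, H t)) : Set (∀ t, H t →L[ℂ] H t) :=
  {a | WeaklyCts Ω a ∧ AlmostFinDim Ω a ∧ (Continuous fun t => ‖a t‖) ∧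
    Filter.Tendsto (fun t => ‖a t‖) (Filter.cocompact T) (nhds 0)}

/-- `I` is a (closed, two-sided, star) ideal of the C*-algebra of operator
fields `A` (with pointwise operations and supremum norm). -/
structure IsIdealOf (A I : Set (∀ t, H t →L[ℂ] H t)) : Prop where
  subset : I ⊆ A
  zero_mem : (0 : ∀ t, H t →L[ℂ] H t) ∈ I
  add_mem : ∀ a ∈ I, ∀ b ∈ I, a + b ∈ I
  smul_mem : ∀ (c : ℂ), ∀ a ∈ I, c • a ∈ I
  star_mem : ∀ a ∈ I, star a ∈ I
  mul_mem_left : ∀ a ∈ A, ∀ b ∈ I, a * b ∈ I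
  mul_mem_right : ∀ a ∈ I, ∀ b ∈ A, a * b ∈ I
  norm_closed : ∀ a ∈ A, (∀ ε : ℝ, 0 < ε → ∃ b ∈ I, ∀ t, ‖a t - b t‖ < ε) → a ∈ I

/-- `I` is an essential ideal of `A`: it has nonzero intersection with every
nonzero ideal of `A`. -/
def IsEssentialIdealOf (A I : Set (∀ t, H t →L[ℂ] H t)) : Prop :=
  IsIdealOf A I ∧
    ∀ J, IsIdealOf A J → (∃ b ∈ J, b ≠ 0) → ∃ c, c ∈ I ∧ c ∈ J ∧ c ≠ 0

/-- The open set `X^I ⊆ T` associated with an ideal `I`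
(the complement of `Z^I = {t | b t = 0 ∀ b ∈ I}`). -/
def idealSupp (I : Set (∀ t, H t →L[ℂ] H t)) : Set T :=
  {t | ∃ b ∈ I, b t ≠ 0}

/-- `Ω_b`: the bounded vector fields of the bundle. -/
def boundedFields (Ω : Set (∀ t, H t)) : Set (∀ t, H t) :=
  {ω | ω ∈ Ω ∧ ∃ M : ℝ, ∀ t, ‖ω t‖ ≤ M}

/-- The rank-one operator field `Θ_{ω,ν} : ξ ↦ ⟨ξ, ν⟩·ω` (inner product linear
in `ξ`, conjugate-linear in `ν`). -/
def rankOneField (ω ν : ∀ t, H t) : ∀ t, H t →L[ℂ] H t :=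
  fun t => (innerSL ℂ (ν t)).smulRight (ω t)

/-- `F(S)`: finite sums of rank-one fields `Θ_{ω,ν}` with `ω, ν ∈ S`. -/
def finRankFields (S : Set (∀ t, H t)) : Set (∀ t, H t →L[ℂ] H t) :=
  {a | ∃ (n : ℕ) (ω ν : Fin n → ∀ t, H t), (∀ i, ω i ∈ S) ∧ (∀ i, ν i ∈ S) ∧
    a = fun t => ∑ i, rankOneField (ω i) (ν i) t}

/-- An operator field `x` is strictly continuous with respect to a family `F`
of operator fields. -/
def StrictlyCts (F : Set (∀ t, H t →L[ℂ] H t)) (x : ∀ t, H t →L[ℂ] H t) : Prop :=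
  ∀ (t₀ : T), ∀ a ∈ F, ∀ ε : ℝ, 0 < ε → ∃ U : Set T, IsOpen U ∧ t₀ ∈ U ∧
    ∃ b ∈ F, ∀ t ∈ U, ‖(x t - b t) * a t‖ + ‖a t * (x t - b t)‖ < ε

/-- The concrete realisation (Akemann–Pedersen–Tomiyama) of the multiplier
algebra: bounded operator fields, strictly continuous w.r.t. `F`. -/
def MultSet (F : Set (∀ t, H t →L[ℂ] H t)) : Set (∀ t, H t →L[ℂ] H t) :=
  {x | (∃ C : ℝ, ∀ t, ‖x t‖ ≤ C) ∧ StrictlyCts F x}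

/-- Conjugation of an operator by a unitary (linear isometric equivalence). -/
def conjCLM {E F : Type*} [NormedAddCommGroup E] [NormedAddCommGroup F]
    [NormedSpace ℂ E] [NormedSpace ℂ F] (e : E ≃ₗᵢ[ℂ] F) (x : E →L[ℂ] E) :
    F →L[ℂ] F :=
  ((e.toContinuousLinearEquiv : E →L[ℂ] F).comp x).comp
    (e.symm.toContinuousLinearEquiv : F →L[ℂ] E)

end

/- ======================  Auxiliary lemmas  ====================== -/

noncomputable section

namespace PiDirectSystemAux

theorem conjCLM_apply {E F : Type*} [NormedAddCommGroup E] [NormedAddCommGroup F]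
    [NormedSpace ℂ E] [NormedSpace ℂ F] (e : E ≃ₗᵢ[ℂ] F) (x : E →L[ℂ] E) (v : F) :
    conjCLM e x v = e (x (e.symm v)) := rfl

variable {E F G : Type*} [NormedAddCommGroup E] [NormedAddCommGroup F] [NormedAddCommGroup G]
  [NormedSpace ℂ E] [NormedSpace ℂ F] [NormedSpace ℂ G]

theorem conjCLM_add (e : E ≃ₗᵢ[ℂ] F) (x y : E →L[ℂ] E) :
    conjCLM e (x + y) = conjCLM e x + conjCLM e y := by
  ext v; simp [conjCLM_apply]

theorem conjCLM_sub (e : E ≃ₗᵢ[ℂ] F) (x y : E →L[ℂ] E) :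
    conjCLM e (x - y) = conjCLM e x - conjCLM e y := by
  ext v; simp [conjCLM_apply]

theorem conjCLM_smul (e : E ≃ₗᵢ[ℂ] F) (c : ℂ) (x : E →L[ℂ] E) :
    conjCLM e (c • x) = c • conjCLM e x := by
  ext v; simp [conjCLM_apply]

theorem conjCLM_zero (e : E ≃ₗᵢ[ℂ] F) : conjCLM e (0 : E →L[ℂ] E) = 0 := by
  ext v; simp [conjCLM_apply]

theorem conjCLM_mul (e : E ≃ₗᵢ[ℂ] F) (x y : E →L[ℂ] E) :
    conjCLM e (x * y) = conjCLM e x * conjCLM e y := by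
  ext v
  simp [conjCLM_apply, ContinuousLinearMap.mul_apply]

theorem conjCLM_conjCLM (e₁ : E ≃ₗᵢ[ℂ] F) (e₂ : F ≃ₗᵢ[ℂ] G) (x : E →L[ℂ] E) :
    conjCLM e₂ (conjCLM e₁ x) = conjCLM (e₁.trans e₂) x := by
  ext v
  simp [conjCLM_apply]

theorem conjCLM_norm_le (e : E ≃ₗᵢ[ℂ] F) (x : E →L[ℂ] E) :
    ‖conjCLM e x‖ ≤ ‖x‖ := by
  refine ContinuousLinearMap.opNorm_le_bound _ (norm_nonneg x) fun v => ?_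
  rw [conjCLM_apply, e.norm_map]
  calc ‖x (e.symm v)‖ ≤ ‖x‖ * ‖e.symm v‖ := x.le_opNorm _
    _ = ‖x‖ * ‖v‖ := by rw [e.symm.norm_map]

theorem conjCLM_symm_conjCLM (e : E ≃ₗᵢ[ℂ] F) (x : E →L[ℂ] E) :
    conjCLM e.symm (conjCLM e x) = x := by
  ext v
  simp [conjCLM_apply]

theorem conjCLM_norm (e : E ≃ₗᵢ[ℂ] F) (x : E →L[ℂ] E) :
    ‖conjCLM e x‖ = ‖x‖ := by
  refine le_antisymm (conjCLM_norm_le e x) ?_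
  have h := conjCLM_norm_le e.symm (conjCLM e x)
  rwa [conjCLM_symm_conjCLM] at h

theorem conjCLM_injective (e : E ≃ₗᵢ[ℂ] F) {x y : E →L[ℂ] E}
    (h : conjCLM e x = conjCLM e y) : x = y := by
  have := congrArg (conjCLM e.symm) h
  rwa [conjCLM_symm_conjCLM, conjCLM_symm_conjCLM] at this

theorem conjCLM_congr {e₁ e₂ : E ≃ₗᵢ[ℂ] F} (h : ∀ v, e₁ v = e₂ v) (x : E →L[ℂ] E) :
    conjCLM e₁ x = conjCLM e₂ x := by
  have : e₁ = e₂ := LinearIsometryEquiv.ext h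
  rw [this]

section InnerBits

variable {E' F' : Type*} [NormedAddCommGroup E'] [NormedAddCommGroup F']
  [InnerProductSpace ℂ E'] [InnerProductSpace ℂ F']

theorem conjCLM_inner (e : E' ≃ₗᵢ[ℂ] F') (x : E' →L[ℂ] E') (v w : F') :
    (inner ℂ (conjCLM e x v) w : ℂ) = inner ℂ (x (e.symm v)) (e.symm w) := by
  rw [conjCLM_apply]
  conv_lhs => rw [← e.apply_symm_apply w]
  exact e.inner_map_map _ _

theorem conjCLM_star [CompleteSpace E'] [CompleteSpace F']
    (e : E' ≃ₗᵢ[ℂ] F') (x : E' →L[ℂ] E') :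
    conjCLM e (star x) = star (conjCLM e x) := by
  rw [ContinuousLinearMap.star_eq_adjoint, ContinuousLinearMap.star_eq_adjoint]
  refine (ContinuousLinearMap.eq_adjoint_iff _ _).2 fun v w => ?_
  rw [conjCLM_apply, conjCLM_apply]
  conv_lhs => rw [← e.apply_symm_apply w]
  rw [e.inner_map_map, ContinuousLinearMap.adjoint_inner_left]
  conv_lhs => rw [← e.inner_map_map]
  rw [e.apply_symm_apply]

end InnerBits

/-- a 3ε-argument: a function locally uniformly approximable near `x₀` by functions
continuous at `x₀` is continuous at `x₀`. -/
theorem continuousAt_of_approx {X : Type*} [TopologicalSpace X] {f : X → ℂ} {x₀ : X}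
    (h : ∀ ε : ℝ, 0 < ε → ∃ g : X → ℂ, ContinuousAt g x₀ ∧
      ∀ᶠ t in nhds x₀, ‖f t - g t‖ ≤ ε) :
    ContinuousAt f x₀ := by
  rw [Metric.continuousAt_iff']
  intro ε hε
  obtain ⟨g, hg, hfg⟩ := h (ε/4) (by positivity)
  have hg' : ∀ᶠ t in nhds x₀, dist (g t) (g x₀) < ε/4 :=
    Metric.tendsto_nhds.mp hg (ε/4) (by positivity)
  have hx₀ : ‖f x₀ - g x₀‖ ≤ ε/4 := hfg.self_of_nhds
  filter_upwards [hfg, hg'] with t h1 h2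
  have e1 : dist (f t) (f x₀) ≤ dist (f t) (g t) + dist (g t) (g x₀) + dist (g x₀) (f x₀) :=
    dist_triangle4 _ _ _ _
  have e2 : dist (g x₀) (f x₀) ≤ ε/4 := by
    rw [dist_eq_norm, norm_sub_rev]; exact hx₀
  have e3 : dist (f t) (g t) ≤ ε/4 := by rw [dist_eq_norm]; exact h1
  calc dist (f t) (f x₀) ≤ dist (f t) (g t) + dist (g t) (g x₀) + dist (g x₀) (f x₀) := e1
    _ < ε := by linarith

/-- every vector in a fibre is the value of a bounded field. -/
theorem exists_bounded_field_eq {T : Type} [TopologicalSpace T] [LocallyCompactSpace T]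
    [T2Space T] {H : T → Type} [∀ t, NormedAddCommGroup (H t)]
    [∀ t, InnerProductSpace ℂ (H t)]
    {Ω : Set (∀ t, H t)} (hΩ : IsCtsHilbertBundle Ω) (x₀ : T) (v : H x₀) :
    ∃ ω ∈ boundedFields Ω, ω x₀ = v := by
  obtain ⟨ω, hω, hv⟩ := hΩ.full x₀ v
  obtain ⟨K, hK, hKn⟩ := exists_compact_mem_nhds x₀
  have hx₀K : x₀ ∈ interior K := mem_interior_iff_mem_nhds.2 hKn
  obtain ⟨f, hf0, hf1, -⟩ := exists_continuous_zero_one_of_isCompact'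
    isCompact_singleton (isOpen_interior (s := K)).isClosed_compl
    (by simpa [Set.disjoint_singleton_left] using hx₀K)
  set g : C(T, ℂ) := ⟨fun t => (f t : ℂ), Complex.continuous_ofReal.comp f.continuous⟩ with hgdef
  have hmem : (fun t => g t • ω t) ∈ Ω := hΩ.smul_mem g ω hω
  refine ⟨fun t => g t • ω t, ⟨hmem, ?_⟩, ?_⟩
  · have hcont : Continuous fun t => ‖g t • ω t‖ := hΩ.norm_continuous _ hmem
    obtain ⟨M, hM⟩ := (hK.image hcont).bddAbove
    refine ⟨max M 0, fun t => ?_⟩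
    by_cases ht : t ∈ K
    · exact le_trans (hM (Set.mem_image_of_mem _ ht)) (le_max_left _ _)
    · have hft : f t = 0 := by
        have : t ∈ (interior K)ᶜ := fun hmem' => ht (interior_subset hmem')
        simpa using hf0 this
      have hgt : g t = 0 := by simp [hgdef, hft]
      show ‖g t • ω t‖ ≤ max M 0
      rw [hgt, zero_smul, norm_zero]
      exact le_max_right _ _
  · have hfx : f x₀ = 1 := by simpa using hf1 rfl
    have hg1 : g x₀ = 1 := by simp [hgdef, hfx]
    show g x₀ • ω x₀ = v
    rw [hg1, one_smul, hv]

end PiDirectSystemAux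

end
open PiDirectSystemAux
set_option maxHeartbeats 1000000

/-- Proposition `systems2`.  For essential ideals `I ⊆ J` of
the Fell algebra `A`, the conjugation maps
`π_{JI}(a) = (t ↦ Ψ_{JIt} a(Φ_{JI}t) Ψ_{JIt}⁻¹)` carry `A^J` into `A^I`, are
isometric *-monomorphisms, form a direct system (`π_{II} = id`,
`π_{KI} = π_{JI} ∘ π_{KJ}`), and satisfy `δ_I = π_{JI} ∘ δ_J|_I`. -/
theorem pi_direct_system
    {T : Type} [TopologicalSpace T] [LocallyCompactSpace T] [T2Space T]
    {H : T → Type} [∀ t, NormedAddCommGroup (H t)] [∀ t, InnerProductSpace ℂ (H t)]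
    [∀ t, CompleteSpace (H t)]
    (Ω : Set (∀ t, H t)) (hΩ : IsCtsHilbertBundle Ω)
    (I J K : Set (∀ t, H t →L[ℂ] H t))
    (hI : IsEssentialIdealOf (FellAlgebra Ω) I)
    (hJ : IsEssentialIdealOf (FellAlgebra Ω) J)
    (hK : IsEssentialIdealOf (FellAlgebra Ω) K)
    (hIJ : I ⊆ J) (hJK : J ⊆ K)
    (hXIJ : (idealSupp I : Set T) ⊆ idealSupp J)
    (hXJK : (idealSupp J : Set T) ⊆ idealSupp K)
    {βXI βXJ βXK : Type}
    [TopologicalSpace βXI] [CompactSpace βXI] [T2Space βXI]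
    [TopologicalSpace βXJ] [CompactSpace βXJ] [T2Space βXJ]
    [TopologicalSpace βXK] [CompactSpace βXK] [T2Space βXK]
    (ιI : idealSupp I → βXI) (hιI : Topology.IsEmbedding ιI) (hιId : DenseRange ιI)
    (ιJ : idealSupp J → βXJ) (hιJ : Topology.IsEmbedding ιJ) (hιJd : DenseRange ιJ)
    (ιK : idealSupp K → βXK) (hιK : Topology.IsEmbedding ιK) (hιKd : DenseRange ιK)
    {HI : βXI → Type} [∀ u, NormedAddCommGroup (HI u)]
    [∀ u, InnerProductSpace ℂ (HI u)] [∀ u, CompleteSpace (HI u)]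
    {HJ : βXJ → Type} [∀ u, NormedAddCommGroup (HJ u)]
    [∀ u, InnerProductSpace ℂ (HJ u)] [∀ u, CompleteSpace (HJ u)]
    {HK : βXK → Type} [∀ u, NormedAddCommGroup (HK u)]
    [∀ u, InnerProductSpace ℂ (HK u)] [∀ u, CompleteSpace (HK u)]
    (barI : (∀ t, H t) → ∀ u, HI u) (barJ : (∀ t, H t) → ∀ u, HJ u)
    (barK : (∀ t, H t) → ∀ u, HK u)
    (hbarI_dense : ∀ (u : βXI) (v : HI u) (ε : ℝ), 0 < ε →
      ∃ ω ∈ boundedFields Ω, ‖barI ω u - v‖ < ε)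
    (hbarJ_dense : ∀ (u : βXJ) (v : HJ u) (ε : ℝ), 0 < ε →
      ∃ ω ∈ boundedFields Ω, ‖barJ ω u - v‖ < ε)
    (hbarK_dense : ∀ (u : βXK) (v : HK u) (ε : ℝ), 0 < ε →
      ∃ ω ∈ boundedFields Ω, ‖barK ω u - v‖ < ε)
    (ΦJI : βXI → βXJ) (hΦJI : Continuous ΦJI) (hΦJIsurj : Function.Surjective ΦJI)
    (hΦJIι : ∀ x : idealSupp I, ΦJI (ιI x) = ιJ (Set.inclusion hXIJ x))
    (ΦKJ : βXJ → βXK) (hΦKJ : Continuous ΦKJ) (hΦKJsurj : Function.Surjective ΦKJ)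
    (hΦKJι : ∀ x : idealSupp J, ΦKJ (ιJ x) = ιK (Set.inclusion hXJK x))
    (ΦKI : βXI → βXK) (hΦKI : Continuous ΦKI) (hΦKIsurj : Function.Surjective ΦKI)
    (hΦKIι : ∀ x : idealSupp I,
      ΦKI (ιI x) = ιK (Set.inclusion (hXIJ.trans hXJK) x))
    (hΦcomp : ∀ t : βXI, ΦKI t = ΦKJ (ΦJI t))
    (ΨJI : ∀ t : βXI, HJ (ΦJI t) ≃ₗᵢ[ℂ] HI t)
    (ΨKJ : ∀ r : βXJ, HK (ΦKJ r) ≃ₗᵢ[ℂ] HJ r)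
    (ΨKI : ∀ t : βXI, HK (ΦKI t) ≃ₗᵢ[ℂ] HI t)
    (hΨJI : ∀ (t : βXI), ∀ ω ∈ boundedFields Ω, ΨJI t (barJ ω (ΦJI t)) = barI ω t)
    (hΨKJ : ∀ (r : βXJ), ∀ ω ∈ boundedFields Ω, ΨKJ r (barK ω (ΦKJ r)) = barJ ω r)
    (hΨKI : ∀ (t : βXI), ∀ ω ∈ boundedFields Ω, ΨKI t (barK ω (ΦKI t)) = barI ω t)
    -- the identifications `H^I_{ι_I x} = H_x`, `H^J_{ι_J x} = H_x` and the
    -- monomorphisms `δ_I : I → A^I`, `δ_J : J → A^J` of Proposition 2: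
    (eI : ∀ x : idealSupp I, H x.1 ≃ₗᵢ[ℂ] HI (ιI x))
    (heI : ∀ ω ∈ boundedFields Ω, ∀ x : idealSupp I, barI ω (ιI x) = eI x (ω x.1))
    (eJ : ∀ x : idealSupp J, H x.1 ≃ₗᵢ[ℂ] HJ (ιJ x))
    (heJ : ∀ ω ∈ boundedFields Ω, ∀ x : idealSupp J, barJ ω (ιJ x) = eJ x (ω x.1))
    (δI : (∀ t, H t →L[ℂ] H t) → ∀ u, HI u →L[ℂ] HI u)
    (hδI_mem : ∀ a ∈ I, δI a ∈
      FellAlgebra {ν : ∀ u, HI u | LocUnifApprox (barI '' boundedFields Ω) ν})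
    (hδI_val : ∀ a ∈ I, ∀ x : idealSupp I, δI a (ιI x) = conjCLM (eI x) (a x.1))
    (hδI_zero : ∀ a ∈ I, ∀ u : βXI, u ∉ Set.range ιI → δI a u = 0)
    (δJ : (∀ t, H t →L[ℂ] H t) → ∀ u, HJ u →L[ℂ] HJ u)
    (hδJ_mem : ∀ a ∈ J, δJ a ∈
      FellAlgebra {ν : ∀ u, HJ u | LocUnifApprox (barJ '' boundedFields Ω) ν})
    (hδJ_val : ∀ a ∈ J, ∀ x : idealSupp J, δJ a (ιJ x) = conjCLM (eJ x) (a x.1))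
    (hδJ_zero : ∀ a ∈ J, ∀ u : βXJ, u ∉ Set.range ιJ → δJ a u = 0) :
    -- `π_{JI}` maps `A^J` into `A^I` …
    (∀ a ∈ FellAlgebra {ν : ∀ u, HJ u | LocUnifApprox (barJ '' boundedFields Ω) ν},
      (fun t => conjCLM (ΨJI t) (a (ΦJI t))) ∈
        FellAlgebra {ν : ∀ u, HI u | LocUnifApprox (barI '' boundedFields Ω) ν}) ∧
    -- … is a *-homomorphism …
    (∀ a b : ∀ u, HJ u →L[ℂ] HJ u,
      (fun t => conjCLM (ΨJI t) ((a + b) (ΦJI t))) =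
        (fun t => conjCLM (ΨJI t) (a (ΦJI t))) + fun t => conjCLM (ΨJI t) (b (ΦJI t))) ∧
    (∀ (c : ℂ) (a : ∀ u, HJ u →L[ℂ] HJ u),
      (fun t => conjCLM (ΨJI t) ((c • a) (ΦJI t))) =
        c • fun t => conjCLM (ΨJI t) (a (ΦJI t))) ∧
    (∀ a b : ∀ u, HJ u →L[ℂ] HJ u,
      (fun t => conjCLM (ΨJI t) ((a * b) (ΦJI t))) =
        (fun t => conjCLM (ΨJI t) (a (ΦJI t))) * fun t => conjCLM (ΨJI t) (b (ΦJI t))) ∧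
    (∀ a : ∀ u, HJ u →L[ℂ] HJ u,
      (fun t => conjCLM (ΨJI t) ((star a) (ΦJI t))) =
        star fun t => conjCLM (ΨJI t) (a (ΦJI t))) ∧
    -- … which is isometric:
    (∀ a : ∀ u, HJ u →L[ℂ] HJ u,
      (⨆ t : βXI, ‖conjCLM (ΨJI t) (a (ΦJI t))‖) = ⨆ r : βXJ, ‖a r‖) ∧
    (∀ a b : ∀ u, HJ u →L[ℂ] HJ u,
      (fun t => conjCLM (ΨJI t) (a (ΦJI t))) = (fun t => conjCLM (ΨJI t) (b (ΦJI t)))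
        → a = b) ∧
    -- `π_{II} = id`:
    (∀ (ΦII : βXI → βXI), Continuous ΦII → (∀ x : idealSupp I, ΦII (ιI x) = ιI x) →
      ∀ (ΨII : ∀ t : βXI, HI (ΦII t) ≃ₗᵢ[ℂ] HI t),
      (∀ (t : βXI), ∀ ω ∈ boundedFields Ω, ΨII t (barI ω (ΦII t)) = barI ω t) →
      ∀ a ∈ FellAlgebra {ν : ∀ u, HI u | LocUnifApprox (barI '' boundedFields Ω) ν},
        (fun t => conjCLM (ΨII t) (a (ΦII t))) = a) ∧
    -- `π_{KI} = π_{JI} ∘ π_{KJ}`: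
    (∀ a ∈ FellAlgebra {ν : ∀ u, HK u | LocUnifApprox (barK '' boundedFields Ω) ν},
      (fun t => conjCLM (ΨKI t) (a (ΦKI t))) =
        fun t => conjCLM (ΨJI t) (conjCLM (ΨKJ (ΦJI t)) (a (ΦKJ (ΦJI t))))) ∧
    -- `δ_I = π_{JI} ∘ δ_J|_I`:
    (∀ a ∈ I, δI a = fun t => conjCLM (ΨJI t) (δJ a (ΦJI t))) := by
  classical
  -- dense sets of bounded-field values in the fibres over βXI and βXK
  have hbddI : ∀ u : βXI, Dense {v : HI u | ∃ ω ∈ boundedFields Ω, barI ω u = v} := by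
    intro u
    rw [Metric.dense_iff]
    intro v r hr
    obtain ⟨ω, hω, hlt⟩ := hbarI_dense u v r hr
    exact ⟨barI ω u, Metric.mem_ball.2 (by rwa [dist_eq_norm]), ⟨ω, hω, rfl⟩⟩
  have hbddK : ∀ u : βXK, Dense {v : HK u | ∃ ω ∈ boundedFields Ω, barK ω u = v} := by
    intro u
    rw [Metric.dense_iff]
    intro v r hr
    obtain ⟨ω, hω, hlt⟩ := hbarK_dense u v r hr
    exact ⟨barK ω u, Metric.mem_ball.2 (by rwa [dist_eq_norm]), ⟨ω, hω, rfl⟩⟩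
  have happrox : ∀ (ω : ∀ u, HI u), LocUnifApprox (barI '' boundedFields Ω) ω →
      ∀ (t₁ : βXI) (δ : ℝ), 0 < δ → ∃ U : Set βXI, IsOpen U ∧ t₁ ∈ U ∧
        ∃ μ ∈ boundedFields Ω, ∀ t ∈ U, ‖barI μ t - ω t‖ < δ := by
    intro ω hω t₁ δ hδ
    obtain ⟨U, hUo, ht₁, w, ⟨μ, hμ, rfl⟩, hap⟩ := hω t₁ δ hδ
    exact ⟨U, hUo, ht₁, μ, hμ, hap⟩
  have hsymm_norm : ∀ (t : βXI) (z : HJ (ΦJI t)) (v : HI t),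
      ‖(ΨJI t).symm v - z‖ = ‖v - ΨJI t z‖ := by
    intro t z v
    rw [← (ΨJI t).norm_map, map_sub, (ΨJI t).apply_symm_apply]
  have hJat : ∀ ν ∈ boundedFields Ω, ∀ t : βXI, ‖barJ ν (ΦJI t)‖ = ‖barI ν t‖ := by
    intro ν hν t
    rw [← hΨJI t ν hν, (ΨJI t).norm_map]
  have hIrange_norm : ∀ ν ∈ boundedFields Ω, ∀ M : ℝ, (∀ s, ‖ν s‖ ≤ M) →
      ∀ x : idealSupp I, ‖barI ν (ιI x)‖ ≤ M := by
    intro ν hν M hM x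
    rw [heI ν hν x, (eI x).norm_map]
    exact hM x.1
  have htrans : ∀ O : Set βXI, IsOpen O → ∀ g₁ g₂ : βXI → ℂ, Continuous g₁ →
      Continuous g₂ → ∀ B : ℝ,
      (∀ x : idealSupp I, ιI x ∈ O → ‖g₁ (ιI x) - g₂ (ιI x)‖ ≤ B) →
      ∀ t ∈ O, ‖g₁ t - g₂ t‖ ≤ B := by
    intro O hO g₁ g₂ h₁ h₂ B hB t ht
    have hsubset : O ∩ Set.range ιI ⊆ {s | ‖g₁ s - g₂ s‖ ≤ B} := by
      rintro s ⟨hsO, x, rfl⟩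
      exact hB x hsO
    have hclosed : IsClosed {s : βXI | ‖g₁ s - g₂ s‖ ≤ B} :=
      isClosed_le ((h₁.sub h₂).norm) continuous_const
    exact closure_minimal hsubset hclosed (hιId.open_subset_closure_inter hO ht)
  refine ⟨?_, ?_, ?_, ?_, ?_, ?_, ?_, ?_, ?_, ?_⟩
  · -- (1) membership
    intro a ha
    obtain ⟨haw, hafd, hanc, -⟩ := ha
    obtain ⟨C, hC0, hCb⟩ : ∃ C : ℝ, 0 ≤ C ∧ ∀ r, ‖a r‖ ≤ C := by
      obtain ⟨C₀, hC₀⟩ := (isCompact_range hanc).bddAbove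
      exact ⟨max C₀ 0, le_max_right _ _,
        fun r => le_trans (hC₀ (Set.mem_range_self r)) (le_max_left _ _)⟩
    have hIP : ∀ (r : βXJ) (z w : HJ r), ‖(inner ℂ (a r z) w : ℂ)‖ ≤ C * ‖z‖ * ‖w‖ := by
      intro r z w
      calc ‖(inner ℂ (a r z) w : ℂ)‖ ≤ ‖a r z‖ * ‖w‖ := norm_inner_le_norm _ _
        _ ≤ (‖a r‖ * ‖z‖) * ‖w‖ := by
            gcongr
            exact (a r).le_opNorm z
        _ ≤ (C * ‖z‖) * ‖w‖ := by
            gcongr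
            exact hCb r
        _ = C * ‖z‖ * ‖w‖ := by ring
    have hselfJ : ∀ μ ∈ boundedFields Ω,
        barJ μ ∈ {ν : ∀ u, HJ u | LocUnifApprox (barJ '' boundedFields Ω) ν} := by
      intro μ hμ t₀ ε hε
      exact ⟨Set.univ, isOpen_univ, trivial, barJ μ, ⟨μ, hμ, rfl⟩, fun t _ => by simpa using hε⟩
    have hg : ∀ μ ∈ boundedFields Ω, ∀ ν ∈ boundedFields Ω,
        Continuous fun t : βXI => (inner ℂ (a (ΦJI t) (barJ μ (ΦJI t))) (barJ ν (ΦJI t)) : ℂ) := by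
      intro μ hμ ν hν
      exact (haw _ (hselfJ μ hμ) _ (hselfJ ν hν)).comp hΦJI
    -- continuity of the mixed functions (one unknown slot, one bounded-field slot)
    have hmixR : ∀ (ω : ∀ u, HI u), LocUnifApprox (barI '' boundedFields Ω) ω →
        ∀ ν ∈ boundedFields Ω, ∀ Mν : ℝ, 0 ≤ Mν → (∀ s, ‖ν s‖ ≤ Mν) →
        Continuous fun t : βXI =>
          (inner ℂ (a (ΦJI t) ((ΨJI t).symm (ω t))) (barJ ν (ΦJI t)) : ℂ) := by
      intro ω hω ν hν Mν hMν0 hMν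
      rw [continuous_iff_continuousAt]
      intro t₁
      apply continuousAt_of_approx
      intro ε hε
      have hδ'pos : (0:ℝ) < ε / (C * Mν + 1) := by positivity
      obtain ⟨U, hUo, ht₁U, μ', hμ', hap'⟩ := happrox ω hω t₁ _ hδ'pos
      refine ⟨fun t => (inner ℂ (a (ΦJI t) (barJ μ' (ΦJI t))) (barJ ν (ΦJI t)) : ℂ),
        (hg μ' hμ' ν hν).continuousAt, ?_⟩
      refine Filter.eventually_of_mem (hUo.mem_nhds ht₁U) ?_
      intro t htU
      set δ' : ℝ := ε / (C * Mν + 1) with hδ'def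
      have hmain : ‖(inner ℂ (a (ΦJI t) ((ΨJI t).symm (ω t))) (barJ ν (ΦJI t)) : ℂ) -
          (inner ℂ (a (ΦJI t) (barJ μ' (ΦJI t))) (barJ ν (ΦJI t)) : ℂ)‖ ≤ C * Mν * δ' := by
        refine le_of_forall_pos_le_add fun ε' hε' => ?_
        have hδ''pos : (0:ℝ) < ε' / (C * ‖barJ ν (ΦJI t)‖ + C * Mν + 1) := by positivity
        obtain ⟨U'', hU''o, htU'', μ'', hμ'', hap''⟩ := happrox ω hω t _ hδ''pos
        set δ'' : ℝ := ε' / (C * ‖barJ ν (ΦJI t)‖ + C * Mν + 1) with hδ''def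
        have hsplit : (inner ℂ (a (ΦJI t) ((ΨJI t).symm (ω t))) (barJ ν (ΦJI t)) : ℂ) -
            (inner ℂ (a (ΦJI t) (barJ μ' (ΦJI t))) (barJ ν (ΦJI t)) : ℂ) =
            (inner ℂ (a (ΦJI t) ((ΨJI t).symm (ω t) - barJ μ'' (ΦJI t))) (barJ ν (ΦJI t)) : ℂ) +
            ((inner ℂ (a (ΦJI t) (barJ μ'' (ΦJI t))) (barJ ν (ΦJI t)) : ℂ) -
             (inner ℂ (a (ΦJI t) (barJ μ' (ΦJI t))) (barJ ν (ΦJI t)) : ℂ)) := by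
          rw [map_sub, inner_sub_left]
          ring
        rw [hsplit]
        have hb1 : ‖(inner ℂ (a (ΦJI t) ((ΨJI t).symm (ω t) - barJ μ'' (ΦJI t))) (barJ ν (ΦJI t)) : ℂ)‖ ≤
            C * δ'' * ‖barJ ν (ΦJI t)‖ := by
          have h1 : ‖(ΨJI t).symm (ω t) - barJ μ'' (ΦJI t)‖ ≤ δ'' := by
            rw [hsymm_norm t _ _, hΨJI t μ'' hμ'', norm_sub_rev]
            exact (hap'' t htU'').le
          calc ‖(inner ℂ (a (ΦJI t) ((ΨJI t).symm (ω t) - barJ μ'' (ΦJI t))) (barJ ν (ΦJI t)) : ℂ)‖ ≤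
              C * ‖(ΨJI t).symm (ω t) - barJ μ'' (ΦJI t)‖ * ‖barJ ν (ΦJI t)‖ := hIP _ _ _
            _ ≤ C * δ'' * ‖barJ ν (ΦJI t)‖ := by gcongr
        have hb2 : ‖(inner ℂ (a (ΦJI t) (barJ μ'' (ΦJI t))) (barJ ν (ΦJI t)) : ℂ) -
            (inner ℂ (a (ΦJI t) (barJ μ' (ΦJI t))) (barJ ν (ΦJI t)) : ℂ)‖ ≤
            C * (δ'' + δ') * Mν := by
          refine htrans (U ∩ U'') (hUo.inter hU''o) _ _ (hg μ'' hμ'' ν hν) (hg μ' hμ' ν hν)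
            (C * (δ'' + δ') * Mν) ?_ t ⟨htU, htU''⟩
          rintro x ⟨hx1, hx2⟩
          have hd : (inner ℂ (a (ΦJI (ιI x)) (barJ μ'' (ΦJI (ιI x)))) (barJ ν (ΦJI (ιI x))) : ℂ) -
              (inner ℂ (a (ΦJI (ιI x)) (barJ μ' (ΦJI (ιI x)))) (barJ ν (ΦJI (ιI x))) : ℂ) =
              (inner ℂ (a (ΦJI (ιI x)) (barJ μ'' (ΦJI (ιI x)) - barJ μ' (ΦJI (ιI x))))
                (barJ ν (ΦJI (ιI x))) : ℂ) := by
            rw [map_sub, inner_sub_left]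
          rw [hd]
          have hdiff : ‖barJ μ'' (ΦJI (ιI x)) - barJ μ' (ΦJI (ιI x))‖ ≤ δ'' + δ' := by
            have heq : ΨJI (ιI x) (barJ μ'' (ΦJI (ιI x)) - barJ μ' (ΦJI (ιI x))) =
                barI μ'' (ιI x) - barI μ' (ιI x) := by
              rw [map_sub, hΨJI (ιI x) μ'' hμ'', hΨJI (ιI x) μ' hμ']
            rw [← (ΨJI (ιI x)).norm_map, heq]
            calc ‖barI μ'' (ιI x) - barI μ' (ιI x)‖ =
                ‖(barI μ'' (ιI x) - ω (ιI x)) + (ω (ιI x) - barI μ' (ιI x))‖ := by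
                  rw [sub_add_sub_cancel]
              _ ≤ ‖barI μ'' (ιI x) - ω (ιI x)‖ + ‖ω (ιI x) - barI μ' (ιI x)‖ := norm_add_le _ _
              _ ≤ δ'' + δ' := by
                  refine add_le_add (hap'' _ hx2).le ?_
                  rw [norm_sub_rev]
                  exact (hap' _ hx1).le
          have hν' : ‖barJ ν (ΦJI (ιI x))‖ ≤ Mν := by
            rw [hJat ν hν (ιI x)]
            exact hIrange_norm ν hν Mν hMν x
          calc ‖(inner ℂ (a (ΦJI (ιI x)) (barJ μ'' (ΦJI (ιI x)) - barJ μ' (ΦJI (ιI x))))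
              (barJ ν (ΦJI (ιI x))) : ℂ)‖ ≤
              C * ‖barJ μ'' (ΦJI (ιI x)) - barJ μ' (ΦJI (ιI x))‖ * ‖barJ ν (ΦJI (ιI x))‖ :=
                hIP _ _ _
            _ ≤ C * (δ'' + δ') * Mν := by gcongr
        have heq'' : δ'' * (C * ‖barJ ν (ΦJI t)‖ + C * Mν + 1) = ε' := by
          rw [hδ''def]
          field_simp
        calc ‖(inner ℂ (a (ΦJI t) ((ΨJI t).symm (ω t) - barJ μ'' (ΦJI t))) (barJ ν (ΦJI t)) : ℂ) +
            ((inner ℂ (a (ΦJI t) (barJ μ'' (ΦJI t))) (barJ ν (ΦJI t)) : ℂ) -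
             (inner ℂ (a (ΦJI t) (barJ μ' (ΦJI t))) (barJ ν (ΦJI t)) : ℂ))‖ ≤
            C * δ'' * ‖barJ ν (ΦJI t)‖ + C * (δ'' + δ') * Mν :=
              le_trans (norm_add_le _ _) (add_le_add hb1 hb2)
          _ ≤ C * Mν * δ' + ε' := by nlinarith [hδ''pos, norm_nonneg (barJ ν (ΦJI t))]
      refine le_trans hmain ?_
      have hpos : (0:ℝ) < C * Mν + 1 := by positivity
      calc C * Mν * δ' ≤ (C * Mν + 1) * δ' := by
            have : (0:ℝ) ≤ δ' := hδ'pos.le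
            nlinarith
        _ = ε := by
            rw [hδ'def]
            field_simp
    have hmixL : ∀ μ ∈ boundedFields Ω, ∀ Mμ : ℝ, 0 ≤ Mμ → (∀ s, ‖μ s‖ ≤ Mμ) →
        ∀ (ω : ∀ u, HI u), LocUnifApprox (barI '' boundedFields Ω) ω →
        Continuous fun t : βXI =>
          (inner ℂ (a (ΦJI t) (barJ μ (ΦJI t))) ((ΨJI t).symm (ω t)) : ℂ) := by
      intro μ hμ Mμ hMμ0 hMμ ω hω
      rw [continuous_iff_continuousAt]
      intro t₁
      apply continuousAt_of_approx
      intro ε hε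
      have hδ'pos : (0:ℝ) < ε / (C * Mμ + 1) := by positivity
      obtain ⟨U, hUo, ht₁U, ν', hν', hap'⟩ := happrox ω hω t₁ _ hδ'pos
      refine ⟨fun t => (inner ℂ (a (ΦJI t) (barJ μ (ΦJI t))) (barJ ν' (ΦJI t)) : ℂ),
        (hg μ hμ ν' hν').continuousAt, ?_⟩
      refine Filter.eventually_of_mem (hUo.mem_nhds ht₁U) ?_
      intro t htU
      set δ' : ℝ := ε / (C * Mμ + 1) with hδ'def
      have hmain : ‖(inner ℂ (a (ΦJI t) (barJ μ (ΦJI t))) ((ΨJI t).symm (ω t)) : ℂ) -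
          (inner ℂ (a (ΦJI t) (barJ μ (ΦJI t))) (barJ ν' (ΦJI t)) : ℂ)‖ ≤ C * Mμ * δ' := by
        refine le_of_forall_pos_le_add fun ε' hε' => ?_
        have hδ''pos : (0:ℝ) < ε' / (C * ‖barJ μ (ΦJI t)‖ + C * Mμ + 1) := by positivity
        obtain ⟨U'', hU''o, htU'', ν'', hν'', hap''⟩ := happrox ω hω t _ hδ''pos
        set δ'' : ℝ := ε' / (C * ‖barJ μ (ΦJI t)‖ + C * Mμ + 1) with hδ''def
        have hsplit : (inner ℂ (a (ΦJI t) (barJ μ (ΦJI t))) ((ΨJI t).symm (ω t)) : ℂ) -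
            (inner ℂ (a (ΦJI t) (barJ μ (ΦJI t))) (barJ ν' (ΦJI t)) : ℂ) =
            (inner ℂ (a (ΦJI t) (barJ μ (ΦJI t))) ((ΨJI t).symm (ω t) - barJ ν'' (ΦJI t)) : ℂ) +
            ((inner ℂ (a (ΦJI t) (barJ μ (ΦJI t))) (barJ ν'' (ΦJI t)) : ℂ) -
             (inner ℂ (a (ΦJI t) (barJ μ (ΦJI t))) (barJ ν' (ΦJI t)) : ℂ)) := by
          rw [inner_sub_right]
          ring
        rw [hsplit]
        have hb1 : ‖(inner ℂ (a (ΦJI t) (barJ μ (ΦJI t))) ((ΨJI t).symm (ω t) - barJ ν'' (ΦJI t)) : ℂ)‖ ≤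
            C * ‖barJ μ (ΦJI t)‖ * δ'' := by
          have h1 : ‖(ΨJI t).symm (ω t) - barJ ν'' (ΦJI t)‖ ≤ δ'' := by
            rw [hsymm_norm t _ _, hΨJI t ν'' hν'', norm_sub_rev]
            exact (hap'' t htU'').le
          calc ‖(inner ℂ (a (ΦJI t) (barJ μ (ΦJI t))) ((ΨJI t).symm (ω t) - barJ ν'' (ΦJI t)) : ℂ)‖ ≤
              C * ‖barJ μ (ΦJI t)‖ * ‖(ΨJI t).symm (ω t) - barJ ν'' (ΦJI t)‖ := hIP _ _ _
            _ ≤ C * ‖barJ μ (ΦJI t)‖ * δ'' := by gcongr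
        have hb2 : ‖(inner ℂ (a (ΦJI t) (barJ μ (ΦJI t))) (barJ ν'' (ΦJI t)) : ℂ) -
            (inner ℂ (a (ΦJI t) (barJ μ (ΦJI t))) (barJ ν' (ΦJI t)) : ℂ)‖ ≤
            C * Mμ * (δ'' + δ') := by
          refine htrans (U ∩ U'') (hUo.inter hU''o) _ _ (hg μ hμ ν'' hν'') (hg μ hμ ν' hν')
            (C * Mμ * (δ'' + δ')) ?_ t ⟨htU, htU''⟩
          rintro x ⟨hx1, hx2⟩
          have hd : (inner ℂ (a (ΦJI (ιI x)) (barJ μ (ΦJI (ιI x)))) (barJ ν'' (ΦJI (ιI x))) : ℂ) -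
              (inner ℂ (a (ΦJI (ιI x)) (barJ μ (ΦJI (ιI x)))) (barJ ν' (ΦJI (ιI x))) : ℂ) =
              (inner ℂ (a (ΦJI (ιI x)) (barJ μ (ΦJI (ιI x))))
                (barJ ν'' (ΦJI (ιI x)) - barJ ν' (ΦJI (ιI x))) : ℂ) := by
            rw [inner_sub_right]
          rw [hd]
          have hdiff : ‖barJ ν'' (ΦJI (ιI x)) - barJ ν' (ΦJI (ιI x))‖ ≤ δ'' + δ' := by
            have heq : ΨJI (ιI x) (barJ ν'' (ΦJI (ιI x)) - barJ ν' (ΦJI (ιI x))) =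
                barI ν'' (ιI x) - barI ν' (ιI x) := by
              rw [map_sub, hΨJI (ιI x) ν'' hν'', hΨJI (ιI x) ν' hν']
            rw [← (ΨJI (ιI x)).norm_map, heq]
            calc ‖barI ν'' (ιI x) - barI ν' (ιI x)‖ =
                ‖(barI ν'' (ιI x) - ω (ιI x)) + (ω (ιI x) - barI ν' (ιI x))‖ := by
                  rw [sub_add_sub_cancel]
              _ ≤ ‖barI ν'' (ιI x) - ω (ιI x)‖ + ‖ω (ιI x) - barI ν' (ιI x)‖ := norm_add_le _ _
              _ ≤ δ'' + δ' := by
                  refine add_le_add (hap'' _ hx2).le ?_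
                  rw [norm_sub_rev]
                  exact (hap' _ hx1).le
          have hμ' : ‖barJ μ (ΦJI (ιI x))‖ ≤ Mμ := by
            rw [hJat μ hμ (ιI x)]
            exact hIrange_norm μ hμ Mμ hMμ x
          calc ‖(inner ℂ (a (ΦJI (ιI x)) (barJ μ (ΦJI (ιI x))))
              (barJ ν'' (ΦJI (ιI x)) - barJ ν' (ΦJI (ιI x))) : ℂ)‖ ≤
              C * ‖barJ μ (ΦJI (ιI x))‖ * ‖barJ ν'' (ΦJI (ιI x)) - barJ ν' (ΦJI (ιI x))‖ :=
                hIP _ _ _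
            _ ≤ C * Mμ * (δ'' + δ') := by gcongr
        have heq'' : δ'' * (C * ‖barJ μ (ΦJI t)‖ + C * Mμ + 1) = ε' := by
          rw [hδ''def]
          field_simp
        calc ‖(inner ℂ (a (ΦJI t) (barJ μ (ΦJI t))) ((ΨJI t).symm (ω t) - barJ ν'' (ΦJI t)) : ℂ) +
            ((inner ℂ (a (ΦJI t) (barJ μ (ΦJI t))) (barJ ν'' (ΦJI t)) : ℂ) -
             (inner ℂ (a (ΦJI t) (barJ μ (ΦJI t))) (barJ ν' (ΦJI t)) : ℂ))‖ ≤
            C * ‖barJ μ (ΦJI t)‖ * δ'' + C * Mμ * (δ'' + δ') :=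
              le_trans (norm_add_le _ _) (add_le_add hb1 hb2)
          _ ≤ C * Mμ * δ' + ε' := by nlinarith [hδ''pos, norm_nonneg (barJ μ (ΦJI t))]
      refine le_trans hmain ?_
      have hpos : (0:ℝ) < C * Mμ + 1 := by positivity
      calc C * Mμ * δ' ≤ (C * Mμ + 1) * δ' := by
            have : (0:ℝ) ≤ δ' := hδ'pos.le
            nlinarith
        _ = ε := by
            rw [hδ'def]
            field_simp
    refine ⟨?_, ?_, ?_, ?_⟩
    · -- weak continuity
      intro ω₁ hω₁ ω₂ hω₂
      show Continuous fun t : βXI =>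
        (inner ℂ (conjCLM (ΨJI t) (a (ΦJI t)) (ω₁ t)) (ω₂ t) : ℂ)
      have hfeq : (fun t : βXI => (inner ℂ (conjCLM (ΨJI t) (a (ΦJI t)) (ω₁ t)) (ω₂ t) : ℂ)) =
          fun t => (inner ℂ (a (ΦJI t) ((ΨJI t).symm (ω₁ t))) ((ΨJI t).symm (ω₂ t)) : ℂ) :=
        funext fun t => conjCLM_inner _ _ _ _
      rw [hfeq, continuous_iff_continuousAt]
      intro t₀
      apply continuousAt_of_approx
      intro ε hε
      have hCpos : (0:ℝ) < C + 1 := by positivity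
      have hδpos : (0:ℝ) < min 1 (ε / (C + 1)) := lt_min one_pos (by positivity)
      obtain ⟨U₁, hU₁o, ht₀₁, μ, hμ, hap₁⟩ := happrox ω₁ hω₁ t₀ _ hδpos
      obtain ⟨U₂, hU₂o, ht₀₂, ν, hν, hap₂⟩ := happrox ω₂ hω₂ t₀ _ hδpos
      set δ : ℝ := min 1 (ε / (C + 1)) with hδdef
      obtain ⟨Mμ₀, hMμ₀⟩ := hμ.2
      obtain ⟨Mν₀, hMν₀⟩ := hν.2
      have hK := hmixR ω₁ hω₁ ν hν (max Mν₀ 0) (le_max_right _ _)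
        (fun s => le_trans (hMν₀ s) (le_max_left _ _))
      have hM := hmixL μ hμ (max Mμ₀ 0) (le_max_right _ _)
        (fun s => le_trans (hMμ₀ s) (le_max_left _ _)) ω₂ hω₂
      have hG := hg μ hμ ν hν
      refine ⟨fun t => (inner ℂ (a (ΦJI t) ((ΨJI t).symm (ω₁ t))) (barJ ν (ΦJI t)) : ℂ) +
          ((inner ℂ (a (ΦJI t) (barJ μ (ΦJI t))) ((ΨJI t).symm (ω₂ t)) : ℂ) -
           (inner ℂ (a (ΦJI t) (barJ μ (ΦJI t))) (barJ ν (ΦJI t)) : ℂ)),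
        (hK.continuousAt).add ((hM.continuousAt).sub (hG.continuousAt)), ?_⟩
      refine Filter.eventually_of_mem ((hU₁o.inter hU₂o).mem_nhds ⟨ht₀₁, ht₀₂⟩) ?_
      rintro t ⟨ht1, ht2⟩
      have hiden : (inner ℂ (a (ΦJI t) ((ΨJI t).symm (ω₁ t))) ((ΨJI t).symm (ω₂ t)) : ℂ) -
          ((inner ℂ (a (ΦJI t) ((ΨJI t).symm (ω₁ t))) (barJ ν (ΦJI t)) : ℂ) +
           ((inner ℂ (a (ΦJI t) (barJ μ (ΦJI t))) ((ΨJI t).symm (ω₂ t)) : ℂ) -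
            (inner ℂ (a (ΦJI t) (barJ μ (ΦJI t))) (barJ ν (ΦJI t)) : ℂ))) =
          (inner ℂ (a (ΦJI t) ((ΨJI t).symm (ω₁ t) - barJ μ (ΦJI t)))
            ((ΨJI t).symm (ω₂ t) - barJ ν (ΦJI t)) : ℂ) := by
        rw [map_sub, inner_sub_left, inner_sub_right, inner_sub_right]
        ring
      rw [hiden]
      have h1 : ‖(ΨJI t).symm (ω₁ t) - barJ μ (ΦJI t)‖ ≤ δ := by
        rw [hsymm_norm t _ _, hΨJI t μ hμ, norm_sub_rev]
        exact (hap₁ t ht1).le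
      have h2 : ‖(ΨJI t).symm (ω₂ t) - barJ ν (ΦJI t)‖ ≤ δ := by
        rw [hsymm_norm t _ _, hΨJI t ν hν, norm_sub_rev]
        exact (hap₂ t ht2).le
      calc ‖(inner ℂ (a (ΦJI t) ((ΨJI t).symm (ω₁ t) - barJ μ (ΦJI t)))
          ((ΨJI t).symm (ω₂ t) - barJ ν (ΦJI t)) : ℂ)‖ ≤
          C * ‖(ΨJI t).symm (ω₁ t) - barJ μ (ΦJI t)‖ *
            ‖(ΨJI t).symm (ω₂ t) - barJ ν (ΦJI t)‖ := hIP _ _ _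
        _ ≤ C * δ * δ := by gcongr
        _ ≤ ε := by
            have hδ1 : δ ≤ 1 := min_le_left _ _
            have hδ2 : δ * (C + 1) ≤ ε := (le_div_iff₀ hCpos).mp (min_le_right _ _)
            nlinarith [hδpos.le, hC0]
    · -- almost finite dimensionality
      intro t₀ ε hε
      obtain ⟨V, hVo, hV₀, n, σ, hσS, hVp⟩ := hafd (ΦJI t₀) ε hε
      refine ⟨ΦJI ⁻¹' V, hVo.preimage hΦJI, hV₀, n,
        (fun i => fun t => ΨJI t (σ i (ΦJI t))), ?_, ?_⟩
      · intro i
        intro t₁ ε' hε'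
        obtain ⟨V', hV'o, hV'm, w, ⟨μ, hμ, rfl⟩, hap⟩ := hσS i (ΦJI t₁) ε' hε'
        refine ⟨ΦJI ⁻¹' V', hV'o.preimage hΦJI, hV'm, barI μ, ⟨μ, hμ, rfl⟩, ?_⟩
        intro t ht
        have heq : barI μ t - ΨJI t (σ i (ΦJI t)) =
            ΨJI t (barJ μ (ΦJI t) - σ i (ΦJI t)) := by
          rw [map_sub, hΨJI t μ hμ]
        rw [heq, (ΨJI t).norm_map]
        exact hap _ ht
      · intro t ht
        obtain ⟨hli, p, hidem, hsa, hrp, hpn⟩ := hVp (ΦJI t) ht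
        constructor
        · have hker : LinearMap.ker ((ΨJI t).toLinearEquiv :
              HJ (ΦJI t) →ₗ[ℂ] HI t) = ⊥ := LinearEquiv.ker _
          have := hli.map' ((ΨJI t).toLinearEquiv : HJ (ΦJI t) →ₗ[ℂ] HI t) hker
          exact this
        · refine ⟨conjCLM (ΨJI t) p, ?_, ?_, ?_, ?_⟩
          · show conjCLM (ΨJI t) p * conjCLM (ΨJI t) p = conjCLM (ΨJI t) p
            rw [← conjCLM_mul, hidem.eq]
          · show star (conjCLM (ΨJI t) p) = conjCLM (ΨJI t) p
            rw [← conjCLM_star, hsa.star_eq]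
          · have hmap : LinearMap.range (conjCLM (ΨJI t) p : HI t →ₗ[ℂ] HI t) =
                Submodule.map ((ΨJI t).toLinearEquiv : HJ (ΦJI t) →ₗ[ℂ] HI t)
                  (LinearMap.range (p : HJ (ΦJI t) →ₗ[ℂ] HJ (ΦJI t))) := by
              apply le_antisymm
              · rintro u hu
                obtain ⟨v, rfl⟩ := LinearMap.mem_range.1 hu
                exact Submodule.mem_map.2 ⟨p ((ΨJI t).symm v),
                  LinearMap.mem_range.2 ⟨_, rfl⟩, rfl⟩
              · rintro u hu
                obtain ⟨w, hw, rfl⟩ := Submodule.mem_map.1 hu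
                obtain ⟨z, rfl⟩ := LinearMap.mem_range.1 hw
                refine LinearMap.mem_range.2 ⟨ΨJI t z, ?_⟩
                show conjCLM (ΨJI t) p (ΨJI t z) = _
                rw [conjCLM_apply, (ΨJI t).symm_apply_apply]
                rfl
            rw [hmap, hrp, Submodule.map_span]
            congr 1
            rw [← Set.range_comp]
            rfl
          · show ‖conjCLM (ΨJI t) p * conjCLM (ΨJI t) (a (ΦJI t)) * conjCLM (ΨJI t) p -
              conjCLM (ΨJI t) (a (ΦJI t))‖ < ε
            rw [← conjCLM_mul, ← conjCLM_mul, ← conjCLM_sub, conjCLM_norm]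
            exact hpn
    · -- norm continuity
      have heq : (fun t : βXI => ‖conjCLM (ΨJI t) (a (ΦJI t))‖) = fun t => ‖a (ΦJI t)‖ :=
        funext fun t => conjCLM_norm _ _
      show Continuous fun t : βXI => ‖conjCLM (ΨJI t) (a (ΦJI t))‖
      rw [heq]
      exact hanc.comp hΦJI
    · -- vanishing at infinity (trivial: βXI is compact)
      have hbot : Filter.cocompact βXI = ⊥ := Filter.cocompact_eq_bot
      show Filter.Tendsto (fun t : βXI => ‖conjCLM (ΨJI t) (a (ΦJI t))‖)
        (Filter.cocompact βXI) (nhds 0)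
      rw [hbot]
      exact Filter.tendsto_bot
  · -- (2) additivity
    intro a b
    funext t
    show conjCLM (ΨJI t) (a (ΦJI t) + b (ΦJI t)) =
      conjCLM (ΨJI t) (a (ΦJI t)) + conjCLM (ΨJI t) (b (ΦJI t))
    exact conjCLM_add _ _ _
  · -- (3) homogeneity
    intro c a
    funext t
    show conjCLM (ΨJI t) (c • a (ΦJI t)) = c • conjCLM (ΨJI t) (a (ΦJI t))
    exact conjCLM_smul _ _ _
  · -- (4) multiplicativity
    intro a b
    funext t
    show conjCLM (ΨJI t) (a (ΦJI t) * b (ΦJI t)) =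
      conjCLM (ΨJI t) (a (ΦJI t)) * conjCLM (ΨJI t) (b (ΦJI t))
    exact conjCLM_mul _ _ _
  · -- (5) star preservation
    intro a
    funext t
    show conjCLM (ΨJI t) (star (a (ΦJI t))) = star (conjCLM (ΨJI t) (a (ΦJI t)))
    exact conjCLM_star _ _
  · -- (6) isometry
    intro a
    have heq : (fun t : βXI => ‖conjCLM (ΨJI t) (a (ΦJI t))‖) = fun t => ‖a (ΦJI t)‖ :=
      funext fun t => conjCLM_norm _ _
    calc (⨆ t : βXI, ‖conjCLM (ΨJI t) (a (ΦJI t))‖) = ⨆ t : βXI, ‖a (ΦJI t)‖ := by rw [heq]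
      _ = ⨆ r : βXJ, ‖a r‖ := hΦJIsurj.iSup_comp (g := fun r => ‖a r‖)
  · -- (7) injectivity
    intro a b hab
    funext r
    obtain ⟨t, rfl⟩ := hΦJIsurj r
    exact conjCLM_injective (ΨJI t) (congrFun hab t)
  · -- (8) π_II = id
    intro ΦII hΦIIc hΦIIι ΨII hΨII a _
    have hid : ΦII = fun u => u := by
      refine Continuous.ext_on hιId hΦIIc continuous_id ?_
      rintro _ ⟨x, rfl⟩
      exact hΦIIι x
    funext t
    have main : ∀ q : βXI, q = t → ∀ e : HI q ≃ₗᵢ[ℂ] HI t,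
        (∀ ω ∈ boundedFields Ω, e (barI ω q) = barI ω t) → conjCLM e (a q) = a t := by
      rintro q rfl e he
      have hfun : ⇑e = fun v => v := by
        refine Continuous.ext_on (hbddI q) e.continuous continuous_id ?_
        rintro _ ⟨ω, hω, rfl⟩
        exact he ω hω
      have hsymm : ∀ v, e.symm v = v := by
        intro v
        have h1 : e (e.symm v) = v := e.apply_symm_apply v
        have h2 : e (e.symm v) = e.symm v := congrFun hfun _
        rw [h2] at h1
        exact h1
      ext v
      rw [conjCLM_apply, hsymm]
      exact congrFun hfun _
    exact main (ΦII t) (congrFun hid t) (ΨII t) (hΨII t)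
  · -- (9) composition
    intro a _
    funext t
    have main : ∀ q : βXK, q = ΦKJ (ΦJI t) → ∀ e : HK q ≃ₗᵢ[ℂ] HI t,
        (∀ ω ∈ boundedFields Ω, e (barK ω q) = barI ω t) →
        conjCLM e (a q) =
          conjCLM (ΨJI t) (conjCLM (ΨKJ (ΦJI t)) (a (ΦKJ (ΦJI t)))) := by
      rintro q rfl e he
      rw [conjCLM_conjCLM]
      have hfun : ⇑e = ⇑((ΨKJ (ΦJI t)).trans (ΨJI t)) := by
        refine Continuous.ext_on (hbddK (ΦKJ (ΦJI t))) e.continuous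
          ((ΨKJ (ΦJI t)).trans (ΨJI t)).continuous ?_
        rintro _ ⟨ω, hω, rfl⟩
        rw [he ω hω, LinearIsometryEquiv.trans_apply, hΨKJ (ΦJI t) ω hω, hΨJI t ω hω]
      exact conjCLM_congr (fun v => congrFun hfun v) _
    exact main (ΦKI t) (hΦcomp t) (ΨKI t) (hΨKI t)
  · -- (10) δ_I = π_JI ∘ δ_J
    intro a haI
    funext u
    by_cases hu : u ∈ Set.range ιI
    · obtain ⟨x, rfl⟩ := hu
      have main : ∀ q : βXJ, q = ιJ (Set.inclusion hXIJ x) → ∀ e : HJ q ≃ₗᵢ[ℂ] HI (ιI x),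
          (∀ ω ∈ boundedFields Ω, e (barJ ω q) = barI ω (ιI x)) →
          δI a (ιI x) = conjCLM e (δJ a q) := by
        rintro q rfl e he
        rw [hδI_val a haI x, hδJ_val a (hIJ haI) (Set.inclusion hXIJ x), conjCLM_conjCLM]
        refine conjCLM_congr (fun v => ?_) _
        obtain ⟨ω, hω, rfl⟩ := exists_bounded_field_eq hΩ x.1 v
        have h1 : (eI x) (ω x.1) = barI ω (ιI x) := (heI ω hω x).symm
        have h2 : ((eJ (Set.inclusion hXIJ x)).trans e) (ω x.1) = barI ω (ιI x) := by
          rw [LinearIsometryEquiv.trans_apply]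
          have h3 : (eJ (Set.inclusion hXIJ x)) (ω x.1) =
              barJ ω (ιJ (Set.inclusion hXIJ x)) := (heJ ω hω (Set.inclusion hXIJ x)).symm
          rw [h3, he ω hω]
        rw [h1, h2]
      exact main (ΦJI (ιI x)) (hΦJIι x) (ΨJI (ιI x)) (hΨJI (ιI x))
    · have hF : (fun w : βXI => ‖δI a w‖) = fun w => ‖δJ a (ΦJI w)‖ := by
        have c1 : Continuous fun w : βXI => ‖δI a w‖ := (hδI_mem a haI).2.2.1
        have c2 : Continuous fun w : βXI => ‖δJ a (ΦJI w)‖ :=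
          ((hδJ_mem a (hIJ haI)).2.2.1).comp hΦJI
        refine Continuous.ext_on hιId c1 c2 ?_
        rintro _ ⟨x, rfl⟩
        show ‖δI a (ιI x)‖ = ‖δJ a (ΦJI (ιI x))‖
        rw [hδI_val a haI x, hΦJIι x, hδJ_val a (hIJ haI) (Set.inclusion hXIJ x),
          conjCLM_norm, conjCLM_norm]
      have h0 : δJ a (ΦJI u) = 0 := by
        have h1 := congrFun hF u
        rw [hδI_zero a haI u hu, norm_zero] at h1
        exact norm_eq_zero.mp h1.symm
      rw [hδI_zero a haI u hu, h0, conjCLM_zero]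
end

section
/- Let A = A(T, {H_t}, Ω) be the Fell C*-algebra of a continuous Hilbert bundle over a locally compact Hausdorff space T. Then A = C₀(T, {K(H_t)}_{t∈T}, F(Ω₀)); that is, an operator field a with t ↦ ‖a(t)‖ in C₀(T) belongs to A if and only if a(t) ∈ K(H_t) for every t and a is continuous with respect to F(Ω₀) (a local uniform limit of finite-rank fields from F(Ω₀)). -/
/-! ### Auxiliary lemmas for the proof -/

noncomputable section FellAux

namespace FellAux

open scoped Matrix ComplexConjugate

variable {E : Type*} [NormedAddCommGroup E] [InnerProductSpace ℂ E]

/-- rank-one operator -/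
def rk (w u : E) : E →L[ℂ] E := (innerSL ℂ u).smulRight w

@[simp] lemma rk_apply (w u x : E) : rk w u x = (inner ℂ u x : ℂ) • w := rfl

lemma rankOneField_eq {T : Type*} {H : T → Type*} [∀ t, NormedAddCommGroup (H t)]
    [∀ t, InnerProductSpace ℂ (H t)] (ω ν : ∀ t, H t) (t : T) :
    rankOneField ω ν t = rk (ω t) (ν t) := rfl

lemma norm_rk_le (w u : E) : ‖rk w u‖ ≤ ‖u‖ * ‖w‖ := by
  refine ContinuousLinearMap.opNorm_le_bound _ (by positivity) fun x => ?_
  rw [rk_apply, norm_smul]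
  calc ‖(inner ℂ u x : ℂ)‖ * ‖w‖ ≤ ‖u‖ * ‖x‖ * ‖w‖ := by
        gcongr; exact norm_inner_le_norm u x
    _ = ‖u‖ * ‖w‖ * ‖x‖ := by ring

lemma rk_smul_left (c : ℂ) (w u : E) : rk (c • w) u = c • rk w u := by
  ext x; simp [rk_apply, smul_smul, mul_comm]

lemma rk_smul_right (c : ℂ) (w u : E) : rk w (c • u) = (starRingEnd ℂ c) • rk w u := by
  ext x; simp [rk_apply, inner_smul_left, smul_smul, mul_comm]

lemma rk_sub_left (w w' u : E) : rk w u - rk w' u = rk (w - w') u := by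
  ext x; simp [rk_apply, smul_sub]

lemma rk_sub_right (w u u' : E) : rk w u - rk w u' = rk w (u - u') := by
  ext x; simp [rk_apply, inner_sub_left, sub_smul]

/-- Gram matrix -/
def gram {n : ℕ} (v : Fin n → E) : Matrix (Fin n) (Fin n) ℂ :=
  Matrix.of fun i j => (inner ℂ (v i) (v j) : ℂ)

lemma gram_apply {n : ℕ} (v : Fin n → E) (i j : Fin n) :
    gram v i j = (inner ℂ (v i) (v j) : ℂ) := rfl

lemma gram_mulVec {n : ℕ} (v : Fin n → E) (c : Fin n → ℂ) (j : Fin n) :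
    (gram v).mulVec c j = (inner ℂ (v j) (∑ i, c i • v i) : ℂ) := by
  rw [inner_sum]
  simp [Matrix.mulVec, dotProduct, gram_apply, inner_smul_right, mul_comm]

lemma det_gram_ne_zero {n : ℕ} {v : Fin n → E}
    (hv : LinearIndependent ℂ v) : (gram v).det ≠ 0 := by
  intro hdet
  obtain ⟨c, hc0, hc⟩ := (Matrix.exists_mulVec_eq_zero_iff.2 hdet)
  have hsum : (∑ i, c i • v i) = 0 := by
    have h1 : (inner ℂ (∑ j, c j • v j) (∑ i, c i • v i) : ℂ) = 0 := by
      rw [sum_inner]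
      have h2 : ∀ j, (inner ℂ (c j • v j) (∑ i, c i • v i) : ℂ) = 0 := by
        intro j
        rw [inner_smul_left]
        have hj : (gram v).mulVec c j = 0 := by rw [hc]; rfl
        rw [gram_mulVec] at hj
        rw [hj, mul_zero]
      simp [h2]
    exact inner_self_eq_zero.mp h1
  exact hc0 (funext fun i => (Fintype.linearIndependent_iff.mp hv c hsum) i)

lemma linearIndependent_of_det_gram_ne_zero {n : ℕ} {v : Fin n → E}
    (h : (gram v).det ≠ 0) : LinearIndependent ℂ v := by
  rw [Fintype.linearIndependent_iff]
  intro c hc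
  by_contra hne
  have hc0 : c ≠ 0 := fun h0 => hne fun i => congrFun h0 i
  refine h (Matrix.exists_mulVec_eq_zero_iff.1 ⟨c, hc0, ?_⟩)
  funext j
  rw [gram_mulVec, hc, inner_zero_right]
  rfl

/-- The orthogonal projection onto the span of `v`, via the Gram matrix. -/
def gramProj {n : ℕ} (v : Fin n → E) : E →L[ℂ] E :=
  ∑ i, ∑ j, ((gram v)⁻¹ i j) • rk (v i) (v j)

lemma gramProj_apply {n : ℕ} (v : Fin n → E) (x : E) :
    gramProj v x = ∑ i, (∑ j, (gram v)⁻¹ i j * (inner ℂ (v j) x : ℂ)) • v i := by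
  simp [gramProj, rk, ContinuousLinearMap.sum_apply, Finset.sum_smul, smul_smul]

lemma gramProj_fix {n : ℕ} {v : Fin n → E} (h : (gram v).det ≠ 0) (k : Fin n) :
    gramProj v (v k) = v k := by
  have hinv : (gram v)⁻¹ * gram v = 1 :=
    Matrix.nonsing_inv_mul _ (isUnit_iff_ne_zero.mpr h)
  rw [gramProj_apply]
  have h1 : ∀ i, (∑ j, (gram v)⁻¹ i j * (inner ℂ (v j) (v k) : ℂ))
      = (1 : Matrix (Fin n) (Fin n) ℂ) i k := by
    intro i; rw [← hinv, Matrix.mul_apply]; rfl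
  simp only [h1, Matrix.one_apply]
  simp [Finset.sum_ite_eq']

lemma gramProj_mem_span {n : ℕ} (v : Fin n → E) (x : E) :
    gramProj v x ∈ Submodule.span ℂ (Set.range v) := by
  rw [gramProj_apply]
  exact Submodule.sum_mem _ fun i _ =>
    Submodule.smul_mem _ _ (Submodule.subset_span ⟨i, rfl⟩)

lemma gramProj_eq_self_of_mem {n : ℕ} {v : Fin n → E} (h : (gram v).det ≠ 0)
    {x : E} (hx : x ∈ Submodule.span ℂ (Set.range v)) : gramProj v x = x := by
  induction hx using Submodule.span_induction with
  | mem y hy => obtain ⟨k, rfl⟩ := hy; exact gramProj_fix h k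
  | zero => simp
  | add y z _ _ hy hz => rw [map_add, hy, hz]
  | smul c y _ hy => rw [map_smul, hy]

lemma gramProj_idem {n : ℕ} {v : Fin n → E} (h : (gram v).det ≠ 0) :
    IsIdempotentElem (gramProj v) := by
  rw [IsIdempotentElem]
  ext x
  exact gramProj_eq_self_of_mem h (gramProj_mem_span v x)

lemma range_gramProj {n : ℕ} {v : Fin n → E} (h : (gram v).det ≠ 0) :
    LinearMap.range (gramProj v : E →ₗ[ℂ] E) = Submodule.span ℂ (Set.range v) := by
  apply le_antisymm
  · rintro y ⟨x, rfl⟩; exact gramProj_mem_span v x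
  · intro y hy; exact ⟨y, gramProj_eq_self_of_mem h hy⟩

lemma gram_conjTranspose {n : ℕ} (v : Fin n → E) :
    (gram v)ᴴ = gram v := by
  ext i j
  simp [Matrix.conjTranspose_apply, gram, inner_conj_symm]

lemma gram_inv_conj {n : ℕ} (v : Fin n → E) (i j : Fin n) :
    (starRingEnd ℂ) ((gram v)⁻¹ i j) = (gram v)⁻¹ j i := by
  have h : ((gram v)⁻¹)ᴴ = (gram v)⁻¹ := by
    rw [Matrix.conjTranspose_nonsing_inv, gram_conjTranspose]
  calc (starRingEnd ℂ) ((gram v)⁻¹ i j) = ((gram v)⁻¹)ᴴ j i := rfl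
    _ = (gram v)⁻¹ j i := by rw [h]

lemma gramProj_symm {n : ℕ} (v : Fin n → E) (x y : E) :
    (inner ℂ (gramProj v x) y : ℂ) = inner ℂ x (gramProj v y) := by
  rw [gramProj_apply, gramProj_apply, sum_inner, inner_sum]
  simp only [inner_smul_left, inner_smul_right, map_sum, map_mul, Finset.sum_mul, Finset.mul_sum,
    inner_conj_symm, gram_inv_conj]
  rw [Finset.sum_comm]
  exact Finset.sum_congr rfl fun i _ => Finset.sum_congr rfl fun j _ => by ring

/-- coefficient matrix of compressing `A` by `gramProj v` -/
def compressMat {n : ℕ} (v : Fin n → E) (A : E →L[ℂ] E) : Matrix (Fin n) (Fin n) ℂ :=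
  (gram v)⁻¹ * Matrix.of (fun j k => (inner ℂ (v j) (A (v k)) : ℂ)) * (gram v)⁻¹

lemma gramProj_comp_eq {n : ℕ} (v : Fin n → E) (A : E →L[ℂ] E) (x : E) :
    gramProj v (A (gramProj v x)) =
      ∑ i, ∑ l, (compressMat v A i l) • rk (v i) (v l) x := by
  conv_lhs => rw [gramProj_apply v x]
  rw [map_sum, map_sum]
  have step : ∀ k, gramProj v (A ((∑ j, (gram v)⁻¹ k j * (inner ℂ (v j) x : ℂ)) • v k))
      = ∑ i, (∑ j, (gram v)⁻¹ i j * (inner ℂ (v j) (A (v k)) : ℂ))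
          • ((∑ l, (gram v)⁻¹ k l * (inner ℂ (v l) x : ℂ)) • v i) := by
    intro k
    rw [map_smul, map_smul, gramProj_apply, Finset.smul_sum]
    exact Finset.sum_congr rfl fun i _ => smul_comm _ _ _
  rw [Finset.sum_congr rfl fun k _ => step k]
  rw [Finset.sum_comm]
  refine Finset.sum_congr rfl fun i _ => ?_
  simp only [rk_apply, smul_smul, compressMat, Matrix.mul_apply, Matrix.of_apply]
  rw [← Finset.sum_smul, ← Finset.sum_smul]
  congr 1
  simp only [Finset.mul_sum, Finset.sum_mul]
  rw [Finset.sum_comm]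
  exact Finset.sum_congr rfl fun l _ => Finset.sum_congr rfl fun k _ =>
    Finset.sum_congr rfl fun _ _ => by ring

lemma proj_rk_proj {p : E →L[ℂ] E}
    (hs : ∀ x y, (inner ℂ (p x) y : ℂ) = inner ℂ x (p y)) (w u : E) :
    p * rk w u * p = rk (p w) (p u) := by
  ext x
  simp only [ContinuousLinearMap.mul_apply, rk_apply, map_smul]
  congr 1
  calc (inner ℂ u (p x) : ℂ) = (starRingEnd ℂ) (inner ℂ (p x) u) := (inner_conj_symm _ _).symm
    _ = (starRingEnd ℂ) (inner ℂ x (p u)) := by rw [hs]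
    _ = inner ℂ (p u) x := inner_conj_symm _ _

section Complete

variable [CompleteSpace E]

lemma isSelfAdjoint_of_symm {p : E →L[ℂ] E}
    (h : ∀ x y, (inner ℂ (p x) y : ℂ) = inner ℂ x (p y)) : IsSelfAdjoint p :=
  ContinuousLinearMap.isSelfAdjoint_iff_isSymmetric.mpr fun x y => h x y

omit [CompleteSpace E] in
lemma idem_apply {p : E →L[ℂ] E} (h1 : IsIdempotentElem p) (x : E) : p (p x) = p x := by
  conv_rhs => rw [← h1]
  rfl

lemma norm_apply_le_of_idem_sa {p : E →L[ℂ] E} (h1 : IsIdempotentElem p)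
    (h2 : IsSelfAdjoint p) (x : E) : ‖p x‖ ≤ ‖x‖ := by
  have hsymm := ContinuousLinearMap.isSelfAdjoint_iff_isSymmetric.mp h2
  have key : (inner ℂ (p x) (p x) : ℂ) = inner ℂ x (p x) := by
    calc (inner ℂ (p x) (p x) : ℂ) = inner ℂ x (p (p x)) := hsymm x (p x)
      _ = inner ℂ x (p x) := by rw [idem_apply h1]
  have h3 : ‖p x‖ ^ 2 ≤ ‖x‖ * ‖p x‖ := by
    calc ‖p x‖ ^ 2 = RCLike.re (inner ℂ (p x) (p x) : ℂ) := (inner_self_eq_norm_sq _).symm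
      _ = RCLike.re (inner ℂ x (p x) : ℂ) := by rw [key]
      _ ≤ ‖(inner ℂ x (p x) : ℂ)‖ := RCLike.re_le_norm _
      _ ≤ ‖x‖ * ‖p x‖ := norm_inner_le_norm x (p x)
  rcases eq_or_lt_of_le (norm_nonneg (p x)) with h0 | h0
  · rw [← h0]; exact norm_nonneg x
  · nlinarith

lemma opNorm_le_one_of_idem_sa {p : E →L[ℂ] E} (h1 : IsIdempotentElem p)
    (h2 : IsSelfAdjoint p) : ‖p‖ ≤ 1 :=
  ContinuousLinearMap.opNorm_le_bound _ zero_le_one fun x => by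
    rw [one_mul]; exact norm_apply_le_of_idem_sa h1 h2 x

lemma idem_sa_unique {p q : E →L[ℂ] E} (hp : IsIdempotentElem p) (hq : IsIdempotentElem q)
    (hps : IsSelfAdjoint p) (hqs : IsSelfAdjoint q)
    (h : LinearMap.range (p : E →ₗ[ℂ] E) = LinearMap.range (q : E →ₗ[ℂ] E)) : p = q := by
  have fix : ∀ (r : E →L[ℂ] E), IsIdempotentElem r → ∀ x ∈ LinearMap.range (r : E →ₗ[ℂ] E), r x = x := by
    rintro r hr x ⟨y, rfl⟩; exact idem_apply hr y
  have hpq : p * q = q := by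
    ext x
    exact fix p hp (q x) (h ▸ LinearMap.mem_range_self _ x)
  have hqp : q * p = p := by
    ext x
    exact fix q hq (p x) (h ▸ LinearMap.mem_range_self _ x)
  have hst := congrArg star hqp
  rw [star_mul, hps.star_eq, hqs.star_eq, hpq] at hst
  exact hst.symm

omit [CompleteSpace E] in
/-- A continuous linear map with range inside a finite-dimensional submodule is compact. -/
lemma isCompactOperator_of_finrank {f : E →L[ℂ] E} {S : Submodule ℂ E}
    [FiniteDimensional ℂ S] (hf : ∀ x, f x ∈ S) : IsCompactOperator (f : E → E) := by
  rw [isCompactOperator_iff_exists_mem_nhds_image_subset_compact]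
  refine ⟨Metric.ball 0 1, Metric.ball_mem_nhds 0 one_pos,
    (Subtype.val : S → E) '' (Metric.closedBall 0 ‖f‖), ?_, ?_⟩
  · exact (ProperSpace.isCompact_closedBall _ _).image continuous_subtype_val
  · rintro y ⟨x, hx, rfl⟩
    refine ⟨⟨f x, hf x⟩, ?_, rfl⟩
    rw [Metric.mem_closedBall, dist_zero_right]
    calc ‖(⟨f x, hf x⟩ : S)‖ = ‖f x‖ := rfl
      _ ≤ ‖f‖ * ‖x‖ := f.le_opNorm x
      _ ≤ ‖f‖ * 1 := by
          gcongr
          exact le_of_lt (by simpa [dist_zero_right] using hx)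
      _ = ‖f‖ := mul_one _

omit [CompleteSpace E] in
lemma dist_sq_gramProj {n : ℕ} {v : Fin n → E} (h : (gram v).det ≠ 0) (w : E) :
    ‖w - gramProj v w‖ ^ 2 =
      ‖w‖ ^ 2 - RCLike.re (inner ℂ w (gramProj v w) : ℂ) := by
  have h2 : ‖gramProj v w‖ ^ 2 = RCLike.re (inner ℂ w (gramProj v w) : ℂ) := by
    rw [← inner_self_eq_norm_sq (𝕜 := ℂ)]
    congr 1
    calc (inner ℂ (gramProj v w) (gramProj v w) : ℂ)
        = inner ℂ w (gramProj v (gramProj v w)) := gramProj_symm v w (gramProj v w)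
      _ = inner ℂ w (gramProj v w) := by rw [idem_apply (gramProj_idem h)]
  rw [@norm_sub_sq ℂ, h2]
  ring

end Complete

end FellAux

end FellAux


noncomputable section FellAux2

namespace FellAux

open scoped ComplexConjugate

attribute [local instance] Classical.propDecidable

variable {T : Type*} [TopologicalSpace T] {H : T → Type*}
  [∀ t, NormedAddCommGroup (H t)] [∀ t, InnerProductSpace ℂ (H t)]
variable {Ω : Set (∀ t, H t)}

lemma inner_field_continuous (hΩ : IsCtsHilbertBundle Ω) {ω ν : ∀ t, H t}
    (hω : ω ∈ Ω) (hν : ν ∈ Ω) :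
    Continuous fun t => (inner ℂ (ω t) (ν t) : ℂ) := by
  have hmem : ∀ (c : ℂ), (fun t => ω t + c • ν t) ∈ Ω := fun c =>
    hΩ.add_mem ω hω _ (hΩ.smul_mem (ContinuousMap.const T c) ν hν)
  have hnc : ∀ (c : ℂ), Continuous fun t => ‖ω t + c • ν t‖ := fun c =>
    hΩ.norm_continuous _ (hmem c)
  have c1 : Continuous fun t => ‖ω t + ν t‖ :=
    hΩ.norm_continuous _ (hΩ.add_mem ω hω ν hν)
  have c2 : Continuous fun t => ‖ω t - ν t‖ := by
    have h := hnc (-1)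
    simp only [neg_one_smul, ← sub_eq_add_neg] at h
    exact h
  have c3 : Continuous fun t => ‖ω t - (RCLike.I : ℂ) • ν t‖ := by
    have h := hnc (-(RCLike.I : ℂ))
    simp only [neg_smul, ← sub_eq_add_neg] at h
    exact h
  have c4 : Continuous fun t => ‖ω t + (RCLike.I : ℂ) • ν t‖ := hnc _
  have hcont : Continuous fun t =>
      (((‖ω t + ν t‖ : ℝ) : ℂ) ^ 2 - ((‖ω t - ν t‖ : ℝ) : ℂ) ^ 2 +
        (((‖ω t - (RCLike.I : ℂ) • ν t‖ : ℝ) : ℂ) ^ 2 -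
          ((‖ω t + (RCLike.I : ℂ) • ν t‖ : ℝ) : ℂ) ^ 2) * (RCLike.I : ℂ)) / 4 := by
    have oc := Complex.continuous_ofReal
    exact ((((oc.comp c1).pow 2).sub ((oc.comp c2).pow 2)).add
      ((((oc.comp c3).pow 2).sub ((oc.comp c4).pow 2)).mul continuous_const)).div_const 4
  refine hcont.congr fun t => ?_
  exact (inner_eq_sum_norm_sq_div_four (𝕜 := ℂ) (ω t) (ν t)).symm

lemma glue_cont {U : Set T} (hU : IsOpen U) {f : T → ℝ} (hf : Continuous f)
    (hsupp : tsupport f ⊆ U) {d : T → ℂ} (hd : ContinuousOn d U) :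
    Continuous fun t => if t ∈ U then (f t : ℂ) * d t else 0 := by
  rw [continuous_iff_continuousAt]
  intro t
  by_cases ht : t ∈ U
  · have h1 : ContinuousAt (fun s => (f s : ℂ) * d s) t :=
      ((Complex.continuous_ofReal.comp hf).continuousAt).mul (hd.continuousAt (hU.mem_nhds ht))
    refine h1.congr ?_
    filter_upwards [hU.mem_nhds ht] with s hs
    simp [hs]
  · have hts : t ∈ (tsupport f)ᶜ := fun hc => ht (hsupp hc)
    have hz : ∀ s ∈ (tsupport f)ᶜ, (if s ∈ U then (f s : ℂ) * d s else 0) = 0 := by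
      intro s hs
      have hfs : f s = 0 := image_eq_zero_of_notMem_tsupport hs
      split <;> simp [hfs]
    refine (continuousAt_const (y := (0 : ℂ))).congr ?_
    filter_upwards [(isClosed_tsupport f).isOpen_compl.mem_nhds hts] with s hs
    exact (hz s hs).symm

lemma tendsto_norm_field_zero {g : T → ℂ} {k : Set T} (hk : IsCompact k)
    (h0 : ∀ t ∉ k, g t = 0) (ω : ∀ t, H t) :
    Filter.Tendsto (fun t => ‖g t • ω t‖) (Filter.cocompact T) (nhds 0) := by
  have hmem : kᶜ ∈ Filter.cocompact T := Filter.mem_cocompact.mpr ⟨k, hk, le_refl _⟩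
  refine tendsto_const_nhds.congr' ?_
  filter_upwards [hmem] with t ht
  rw [h0 t ht, zero_smul, norm_zero]

lemma mem_omega0 (hΩ : IsCtsHilbertBundle Ω) {g : T → ℂ} (hg : Continuous g)
    {k : Set T} (hk : IsCompact k) (h0 : ∀ t ∉ k, g t = 0) {ω : ∀ t, H t} (hω : ω ∈ Ω) :
    (fun t => g t • ω t) ∈
      {ω ∈ Ω | Filter.Tendsto (fun t => ‖ω t‖) (Filter.cocompact T) (nhds 0)} :=
  ⟨hΩ.smul_mem ⟨g, hg⟩ ω hω, tendsto_norm_field_zero hk h0 ω⟩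

end FellAux

end FellAux2


noncomputable section FellAux3

namespace FellAux

attribute [local instance] Classical.propDecidable

variable {T : Type*} [TopologicalSpace T] {H : T → Type*}
  [∀ t, NormedAddCommGroup (H t)] [∀ t, InnerProductSpace ℂ (H t)]
variable {Ω : Set (∀ t, H t)}

/-- `Ω₀`, as a set. -/
def omega0 (Ω : Set (∀ t, H t)) : Set (∀ t, H t) :=
  {ω ∈ Ω | Filter.Tendsto (fun t => ‖ω t‖) (Filter.cocompact T) (nhds 0)}

lemma backward_weaklyCts (hΩ : IsCtsHilbertBundle Ω) {a : ∀ t, H t →L[ℂ] H t}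
    (happ : LocUnifApprox (finRankFields (omega0 Ω)) a) : WeaklyCts Ω a := by
  intro ω₁ hω₁ ω₂ hω₂
  rw [continuous_iff_continuousAt]
  intro t₀
  rw [ContinuousAt, Metric.tendsto_nhds]
  intro ε hε
  set M : ℝ := ‖ω₁ t₀‖ * ‖ω₂ t₀‖ + 1 with hM
  have hM0 : 0 < M := by positivity
  set δ : ℝ := ε / (4 * M) with hδ
  have hδ0 : 0 < δ := by positivity
  obtain ⟨U, hU, ht₀U, κ, hκ, hclose⟩ := happ t₀ δ hδ0
  obtain ⟨n, ωv, νv, hωΩ, hνΩ, hκeq⟩ := hκ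
  have hg : Continuous fun t => (inner ℂ (κ t (ω₁ t)) (ω₂ t) : ℂ) := by
    have heq : (fun t => (inner ℂ (κ t (ω₁ t)) (ω₂ t) : ℂ)) = fun t =>
        ∑ i, (starRingEnd ℂ) (inner ℂ (νv i t) (ω₁ t) : ℂ) * (inner ℂ (ωv i t) (ω₂ t) : ℂ) := by
      funext t
      rw [hκeq]
      simp [rankOneField_eq, rk_apply, ContinuousLinearMap.sum_apply, sum_inner, inner_smul_left]
      exact Finset.sum_congr rfl fun _ _ => mul_comm _ _
    rw [heq]
    exact continuous_finset_sum _ fun i _ =>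
      ((continuous_star.comp (inner_field_continuous hΩ (hνΩ i).1 hω₁)).mul
        (inner_field_continuous hΩ (hωΩ i).1 hω₂))
  have key : ∀ t ∈ U, ‖ω₁ t‖ * ‖ω₂ t‖ ≤ M →
      dist (inner ℂ (a t (ω₁ t)) (ω₂ t) : ℂ) (inner ℂ (κ t (ω₁ t)) (ω₂ t) : ℂ) ≤ δ * M := by
    intro t htU hprod
    rw [dist_eq_norm]
    have h1 : (inner ℂ (a t (ω₁ t)) (ω₂ t) : ℂ) - (inner ℂ (κ t (ω₁ t)) (ω₂ t) : ℂ)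
        = inner ℂ ((a t - κ t) (ω₁ t)) (ω₂ t) := by
      rw [ContinuousLinearMap.sub_apply, inner_sub_left]
    rw [h1]
    calc ‖(inner ℂ ((a t - κ t) (ω₁ t)) (ω₂ t) : ℂ)‖
        ≤ ‖(a t - κ t) (ω₁ t)‖ * ‖ω₂ t‖ := norm_inner_le_norm _ _
      _ ≤ ‖a t - κ t‖ * ‖ω₁ t‖ * ‖ω₂ t‖ := by
          gcongr
          exact (a t - κ t).le_opNorm _
      _ = ‖a t - κ t‖ * (‖ω₁ t‖ * ‖ω₂ t‖) := by ring
      _ ≤ δ * M := by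
          apply mul_le_mul _ hprod (by positivity) (le_of_lt hδ0)
          rw [← norm_sub_rev]
          exact le_of_lt (hclose t htU)
  have hgc : ∀ᶠ t in nhds t₀, dist (inner ℂ (κ t (ω₁ t)) (ω₂ t) : ℂ)
      (inner ℂ (κ t₀ (ω₁ t₀)) (ω₂ t₀) : ℂ) < ε / 4 := by
    have hca := hg.continuousAt (x := t₀)
    rw [ContinuousAt, Metric.tendsto_nhds] at hca
    exact hca _ (by positivity)
  have hprod : ∀ᶠ t in nhds t₀, ‖ω₁ t‖ * ‖ω₂ t‖ ≤ M := by
    have hlt : ‖ω₁ t₀‖ * ‖ω₂ t₀‖ < M := lt_add_one _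
    filter_upwards [((hΩ.norm_continuous _ hω₁).mul
      (hΩ.norm_continuous _ hω₂)).continuousAt.eventually_lt_const hlt] with t ht
    exact le_of_lt ht
  filter_upwards [hU.mem_nhds ht₀U, hgc, hprod] with t htU hgt hpt
  have hδM : δ * M = ε / 4 := by
    rw [hδ]
    field_simp
  have e1 := key t htU hpt
  have e3 := key t₀ ht₀U (le_of_lt (lt_add_one _))
  calc dist (inner ℂ (a t (ω₁ t)) (ω₂ t) : ℂ) (inner ℂ (a t₀ (ω₁ t₀)) (ω₂ t₀) : ℂ)
      ≤ dist (inner ℂ (a t (ω₁ t)) (ω₂ t) : ℂ) (inner ℂ (κ t (ω₁ t)) (ω₂ t) : ℂ)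
        + dist (inner ℂ (κ t (ω₁ t)) (ω₂ t) : ℂ) (inner ℂ (κ t₀ (ω₁ t₀)) (ω₂ t₀) : ℂ)
        + dist (inner ℂ (κ t₀ (ω₁ t₀)) (ω₂ t₀) : ℂ) (inner ℂ (a t₀ (ω₁ t₀)) (ω₂ t₀) : ℂ) :=
        dist_triangle4 _ _ _ _
    _ < ε := by
        rw [dist_comm (inner ℂ (κ t₀ (ω₁ t₀)) (ω₂ t₀) : ℂ)]
        rw [hδM] at e1 e3
        linarith [e1, hgt, e3]

end FellAux

end FellAux3


noncomputable section FellAux4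

namespace FellAux

attribute [local instance] Classical.propDecidable

variable {T : Type*} [TopologicalSpace T] {H : T → Type*}
  [∀ t, NormedAddCommGroup (H t)] [∀ t, InnerProductSpace ℂ (H t)]
variable {Ω : Set (∀ t, H t)}

lemma backward_almostFinDim [∀ t, CompleteSpace (H t)] (hΩ : IsCtsHilbertBundle Ω)
    {a : ∀ t, H t →L[ℂ] H t}
    (happ : LocUnifApprox (finRankFields (omega0 Ω)) a) : AlmostFinDim Ω a := by
  intro t₀ ε hε
  have hε4 : 0 < ε / 4 := by positivity
  obtain ⟨U₁, hU₁, ht₀1, κ, hκ, hclose⟩ := happ t₀ (ε / 4) hε4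
  obtain ⟨n, ωv, νv, hωΩ, hνΩ, hκeq⟩ := hκ
  set W : (Fin n ⊕ Fin n) → ∀ t, H t := Sum.elim ωv νv with hWdef
  have hWΩ : ∀ j, W j ∈ Ω := by
    rintro (j | j)
    · exact (hωΩ j).1
    · exact (hνΩ j).1
  obtain ⟨s, hs_sub, hs_span, hs_li⟩ :=
    exists_linearIndependent ℂ (Set.range fun j => W j t₀)
  have hs_fin : s.Finite := (Set.finite_range _).subset hs_sub
  haveI : Fintype s := hs_fin.fintype
  set m := Fintype.card s with hm
  set e : Fin m ≃ s := (Fintype.equivFin s).symm with he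
  have hchoice : ∀ i : Fin m, ∃ j, W j t₀ = ((e i : s) : H t₀) := fun i => hs_sub (e i).2
  choose idx hidx using hchoice
  set σ : Fin m → ∀ t, H t := fun i => W (idx i) with hσdef
  have hσΩ : ∀ i, σ i ∈ Ω := fun i => hWΩ _
  have hσt₀ : (fun i => σ i t₀) = fun i => ((e i : s) : H t₀) := funext fun i => hidx i
  have hli0 : LinearIndependent ℂ fun i => σ i t₀ := by
    rw [hσt₀]
    exact hs_li.comp e e.injective
  have hdet0 : (gram fun i => σ i t₀).det ≠ 0 := det_gram_ne_zero hli0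
  have hrange : (Set.range fun i => σ i t₀) = s := by
    rw [hσt₀]
    have h1 : Set.range (fun i => ((e i : s) : H t₀))
        = Set.range ((↑) : s → H t₀) := e.surjective.range_comp _
    rw [h1, Subtype.range_coe]
  have hspan0 : ∀ j, W j t₀ ∈ Submodule.span ℂ (Set.range fun i => σ i t₀) := by
    intro j
    rw [hrange, hs_span]
    exact Submodule.subset_span ⟨j, rfl⟩
  have hgc : Continuous fun t => gram fun i => σ i t :=
    continuous_matrix fun i j => inner_field_continuous hΩ (hσΩ i) (hσΩ j)
  have hdc : Continuous fun t => (gram fun i => σ i t).det := hgc.matrix_det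
  set U₂ : Set T := {t | (gram fun i => σ i t).det ≠ 0} with hU₂def
  have hU₂o : IsOpen U₂ := isOpen_compl_singleton.preimage hdc
  have ht₀2 : t₀ ∈ U₂ := hdet0
  have hinvc : ContinuousOn (fun t => (gram fun i => σ i t)⁻¹) U₂ := by
    have heq : (fun t => (gram fun i => σ i t)⁻¹)
        = fun t => ((gram fun i => σ i t).det)⁻¹ • (gram fun i => σ i t).adjugate := by
      funext t
      rw [Matrix.inv_def, Ring.inverse_eq_inv']
    rw [heq]
    exact (hdc.continuousOn.inv₀ fun t ht => ht).smul hgc.matrix_adjugate.continuousOn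
  have hinvc_entry : ∀ i l, ContinuousOn (fun t => (gram fun i' => σ i' t)⁻¹ i l) U₂ :=
    fun i l => (((continuous_apply l).comp (continuous_apply i) :
      Continuous fun M : Matrix (Fin m) (Fin m) ℂ => M i l)).comp_continuousOn hinvc
  set Fj : (Fin n ⊕ Fin n) → T → ℝ := fun j t =>
    ‖W j t‖ ^ 2 - RCLike.re (∑ i, (∑ l, (gram fun i' => σ i' t)⁻¹ i l
        * (inner ℂ (σ l t) (W j t) : ℂ)) * (inner ℂ (W j t) (σ i t) : ℂ)) with hFjdef
  have hFjc : ∀ j, ContinuousOn (Fj j) U₂ := by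
    intro j
    apply ContinuousOn.sub
    · exact ((hΩ.norm_continuous _ (hWΩ j)).pow 2).continuousOn
    · apply RCLike.continuous_re.comp_continuousOn
      apply continuousOn_finset_sum
      intro i _
      apply ContinuousOn.mul
      · apply continuousOn_finset_sum
        intro l _
        exact (hinvc_entry i l).mul
          (inner_field_continuous hΩ (hσΩ l) (hWΩ j)).continuousOn
      · exact (inner_field_continuous hΩ (hWΩ j) (hσΩ i)).continuousOn
  have hFj_eq : ∀ j, ∀ t ∈ U₂, Fj j t
      = ‖W j t - gramProj (fun i => σ i t) (W j t)‖ ^ 2 := by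
    intro j t ht
    have hPw : (inner ℂ (W j t) (gramProj (fun i => σ i t) (W j t)) : ℂ)
        = ∑ i, (∑ l, (gram fun i' => σ i' t)⁻¹ i l * (inner ℂ (σ l t) (W j t) : ℂ))
            * (inner ℂ (W j t) (σ i t) : ℂ) := by
      rw [gramProj_apply, inner_sum]
      exact Finset.sum_congr rfl fun i _ => by rw [inner_smul_right]
    rw [dist_sq_gramProj ht, hPw]
  have hFj0 : ∀ j, Fj j t₀ = 0 := by
    intro j
    rw [hFj_eq j t₀ ht₀2, gramProj_eq_self_of_mem hdet0 (hspan0 j), sub_self, norm_zero]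
    norm_num
  set Mb : ℝ := (∑ i, (‖νv i t₀‖ + ‖ωv i t₀‖)) + 1 with hMbdef
  have hMb0 : 0 < Mb := by positivity
  set η : ℝ := (ε / 4) / Mb with hηdef
  have hη0 : 0 < η := by positivity
  set U₃ : Set T := (U₁ ∩ U₂) ∩ ((⋂ j : Fin n ⊕ Fin n, (U₂ ∩ (Fj j) ⁻¹' Set.Iio (η ^ 2)))
      ∩ {t | (∑ i, (‖νv i t‖ + ‖ωv i t‖)) < Mb}) with hU₃def
  have hU₃o : IsOpen U₃ := by
    apply IsOpen.inter (hU₁.inter hU₂o)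
    apply IsOpen.inter
    · exact isOpen_iInter_of_finite fun j =>
        (hFjc j).isOpen_inter_preimage hU₂o isOpen_Iio
    · have hc : Continuous fun t => (∑ i, (‖νv i t‖ + ‖ωv i t‖)) :=
        continuous_finset_sum _ fun i _ =>
          ((hΩ.norm_continuous _ (hνΩ i).1).add (hΩ.norm_continuous _ (hωΩ i).1))
      exact isOpen_lt hc continuous_const
  have ht₀3 : t₀ ∈ U₃ := by
    refine ⟨⟨ht₀1, ht₀2⟩, Set.mem_iInter.2 fun j => ⟨ht₀2, ?_⟩, ?_⟩
    · rw [Set.mem_preimage, hFj0 j]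
      exact Set.mem_Iio.2 (by positivity)
    · show (∑ i, (‖νv i t₀‖ + ‖ωv i t₀‖)) < Mb
      rw [hMbdef]
      exact lt_add_one _
  refine ⟨U₃, hU₃o, ht₀3, m, σ, hσΩ, ?_⟩
  rintro t ⟨⟨ht1, ht2⟩, htj, htM⟩
  have hdet : (gram fun i => σ i t).det ≠ 0 := ht2
  have hli : LinearIndependent ℂ fun i => σ i t := linearIndependent_of_det_gram_ne_zero hdet
  set p : H t →L[ℂ] H t := gramProj fun i => σ i t with hpdef
  have hidem : IsIdempotentElem p := gramProj_idem hdet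
  have hsa : IsSelfAdjoint p := isSelfAdjoint_of_symm (gramProj_symm _)
  refine ⟨hli, p, hidem, hsa, range_gramProj hdet, ?_⟩
  have hpd : ∀ j : Fin n ⊕ Fin n, ‖p (W j t) - W j t‖ < η := by
    intro j
    have h2 : ‖W j t - p (W j t)‖ ^ 2 < η ^ 2 := by
      rw [← hFj_eq j t ht2]
      exact Set.mem_Iio.1 (Set.mem_iInter.1 htj j).2
    have h3 : ‖W j t - p (W j t)‖ < η := by
      nlinarith [norm_nonneg (W j t - p (W j t))]
    rw [norm_sub_rev] at h3
    exact h3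
  have hκterm : ∀ i : Fin n, ‖p * rk (ωv i t) (νv i t) * p - rk (ωv i t) (νv i t)‖
      ≤ η * (‖νv i t‖ + ‖ωv i t‖) := by
    intro i
    have hcomp : p * rk (ωv i t) (νv i t) * p = rk (p (ωv i t)) (p (νv i t)) :=
      proj_rk_proj (gramProj_symm _) _ _
    rw [hcomp]
    have htri := dist_triangle (rk (p (ωv i t)) (p (νv i t)))
      (rk (ωv i t) (p (νv i t))) (rk (ωv i t) (νv i t))
    rw [dist_eq_norm, dist_eq_norm, dist_eq_norm] at htri
    have hb1 : ‖rk (p (ωv i t)) (p (νv i t)) - rk (ωv i t) (p (νv i t))‖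
        ≤ ‖νv i t‖ * η := by
      rw [rk_sub_left]
      calc ‖rk (p (ωv i t) - ωv i t) (p (νv i t))‖
          ≤ ‖p (νv i t)‖ * ‖p (ωv i t) - ωv i t‖ := norm_rk_le _ _
        _ ≤ ‖νv i t‖ * η := by
            apply mul_le_mul
            · exact norm_apply_le_of_idem_sa hidem hsa _
            · exact le_of_lt (hpd (Sum.inl i))
            · exact norm_nonneg _
            · exact norm_nonneg _
    have hb2 : ‖rk (ωv i t) (p (νv i t)) - rk (ωv i t) (νv i t)‖
        ≤ η * ‖ωv i t‖ := by
      rw [rk_sub_right]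
      calc ‖rk (ωv i t) (p (νv i t) - νv i t)‖
          ≤ ‖p (νv i t) - νv i t‖ * ‖ωv i t‖ := norm_rk_le _ _
        _ ≤ η * ‖ωv i t‖ := by
            apply mul_le_mul_of_nonneg_right (le_of_lt (hpd (Sum.inr i))) (norm_nonneg _)
    calc ‖rk (p (ωv i t)) (p (νv i t)) - rk (ωv i t) (νv i t)‖
        ≤ ‖νv i t‖ * η + η * ‖ωv i t‖ := le_trans htri (add_le_add hb1 hb2)
      _ = η * (‖νv i t‖ + ‖ωv i t‖) := by ring
  have hκt : κ t = ∑ i, rk (ωv i t) (νv i t) := by rw [hκeq]; rfl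
  have hsum : ‖p * κ t * p - κ t‖ ≤ ε / 4 := by
    rw [hκt]
    calc ‖p * (∑ i, rk (ωv i t) (νv i t)) * p - ∑ i, rk (ωv i t) (νv i t)‖
        = ‖∑ i, (p * rk (ωv i t) (νv i t) * p - rk (ωv i t) (νv i t))‖ := by
          rw [Finset.sum_sub_distrib, Finset.mul_sum, Finset.sum_mul]
      _ ≤ ∑ i, ‖p * rk (ωv i t) (νv i t) * p - rk (ωv i t) (νv i t)‖ := norm_sum_le _ _
      _ ≤ ∑ i, η * (‖νv i t‖ + ‖ωv i t‖) := Finset.sum_le_sum fun i _ => hκterm i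
      _ = η * (∑ i, (‖νv i t‖ + ‖ωv i t‖)) := by rw [Finset.mul_sum]
      _ ≤ η * Mb := by
          apply mul_le_mul_of_nonneg_left (le_of_lt htM) (le_of_lt hη0)
      _ = ε / 4 := by
          rw [hηdef]
          field_simp
  have hAK : ‖a t - κ t‖ < ε / 4 := by
    rw [norm_sub_rev]
    exact hclose t ht1
  have hp1 : ‖p‖ ≤ 1 := opNorm_le_one_of_idem_sa hidem hsa
  have hsplit : p * a t * p - a t
      = p * (a t - κ t) * p + ((p * κ t * p - κ t) + (κ t - a t)) := by noncomm_ring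
  have hmid : ‖p * (a t - κ t) * p‖ ≤ ‖a t - κ t‖ := by
    calc ‖p * (a t - κ t) * p‖ ≤ ‖p * (a t - κ t)‖ * ‖p‖ := norm_mul_le _ _
      _ ≤ ‖p‖ * ‖a t - κ t‖ * ‖p‖ := by
          apply mul_le_mul_of_nonneg_right (norm_mul_le _ _) (norm_nonneg _)
      _ ≤ 1 * ‖a t - κ t‖ * 1 := by
          apply mul_le_mul (mul_le_mul_of_nonneg_right hp1 (norm_nonneg _)) hp1
            (norm_nonneg _) (by positivity)
      _ = ‖a t - κ t‖ := by ring
  calc ‖p * a t * p - a t‖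
      = ‖p * (a t - κ t) * p + ((p * κ t * p - κ t) + (κ t - a t))‖ := by rw [hsplit]
    _ ≤ ‖p * (a t - κ t) * p‖ + (‖p * κ t * p - κ t‖ + ‖κ t - a t‖) :=
        le_trans (norm_add_le _ _) (by gcongr; exact norm_add_le _ _)
    _ < ε := by
        rw [norm_sub_rev (κ t)] at *
        have := lt_of_le_of_lt hmid hAK
        linarith [hsum, hAK, this]

end FellAux

end FellAux4


noncomputable section FellAux5

namespace FellAux

attribute [local instance] Classical.propDecidable

variable {T : Type*} [TopologicalSpace T] {H : T → Type*}
  [∀ t, NormedAddCommGroup (H t)] [∀ t, InnerProductSpace ℂ (H t)]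
variable {Ω : Set (∀ t, H t)}

lemma forward_compact [∀ t, CompleteSpace (H t)] {a : ∀ t, H t →L[ℂ] H t}
    (hafd : AlmostFinDim Ω a) (t : T) : IsCompactOperator (a t : H t → H t) := by
  have hex : ∀ k : ℕ, ∃ b : H t →L[ℂ] H t, IsCompactOperator (b : H t → H t) ∧
      ‖b - a t‖ < 1 / ((k : ℝ) + 1) := by
    intro k
    obtain ⟨U, hU, htU, n, ω, hωΩ, hprop⟩ := hafd t (1 / ((k : ℝ) + 1)) (by positivity)
    obtain ⟨hli, p, hidem, hsa, hrange, hnorm⟩ := hprop t htU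
    refine ⟨p * a t * p, ?_, hnorm⟩
    haveI : FiniteDimensional ℂ (Submodule.span ℂ (Set.range fun i => ω i t)) :=
      FiniteDimensional.span_of_finite ℂ (Set.finite_range _)
    apply isCompactOperator_of_finrank (S := Submodule.span ℂ (Set.range fun i => ω i t))
    intro x
    rw [← hrange]
    exact LinearMap.mem_range.2 ⟨a t (p x), rfl⟩
  choose b hbc hbn using hex
  have htend : Filter.Tendsto b Filter.atTop (nhds (a t)) := by
    rw [tendsto_iff_norm_sub_tendsto_zero]
    apply squeeze_zero (fun k => norm_nonneg _) (fun k => le_of_lt (hbn k))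
    exact tendsto_one_div_add_atTop_nhds_zero_nat
  exact isCompactOperator_of_tendsto htend (Filter.Eventually.of_forall hbc)

lemma forward_locUnifApprox {T : Type*} [TopologicalSpace T] [LocallyCompactSpace T]
    [T2Space T] {H : T → Type*} [∀ t, NormedAddCommGroup (H t)]
    [∀ t, InnerProductSpace ℂ (H t)] [∀ t, CompleteSpace (H t)]
    {Ω : Set (∀ t, H t)} (hΩ : IsCtsHilbertBundle Ω) {a : ∀ t, H t →L[ℂ] H t}
    (hw : WeaklyCts Ω a) (hafd : AlmostFinDim Ω a) :
    LocUnifApprox (finRankFields (omega0 Ω)) a := by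
  intro t₀ ε hε
  obtain ⟨U, hU, htU₀, n, ω, hωΩ, hprop⟩ := hafd t₀ (ε / 2) (by positivity)
  have hdet : ∀ t ∈ U, (gram fun i => ω i t).det ≠ 0 :=
    fun t ht => det_gram_ne_zero (hprop t ht).1
  have hPap : ∀ t ∈ U,
      ‖gramProj (fun i => ω i t) * a t * gramProj (fun i => ω i t) - a t‖ < ε / 2 := by
    intro t ht
    obtain ⟨hli, p, hidem, hsa, hrange, hnorm⟩ := hprop t ht
    have hpg : p = gramProj fun i => ω i t :=
      idem_sa_unique hidem (gramProj_idem (hdet t ht)) hsa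
        (isSelfAdjoint_of_symm (gramProj_symm _))
        (hrange.trans (range_gramProj (hdet t ht)).symm)
    rwa [hpg] at hnorm
  set D : T → Matrix (Fin n) (Fin n) ℂ :=
    fun t => compressMat (fun i => ω i t) (a t) with hDdef
  -- continuity of D on U
  have hgc : Continuous fun t => gram fun i => ω i t :=
    continuous_matrix fun i j => inner_field_continuous hΩ (hωΩ i) (hωΩ j)
  have hdc : Continuous fun t => (gram fun i => ω i t).det := hgc.matrix_det
  have hinvc : ContinuousOn (fun t => (gram fun i => ω i t)⁻¹) U := by
    have heq : (fun t => (gram fun i => ω i t)⁻¹)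
        = fun t => ((gram fun i => ω i t).det)⁻¹ • (gram fun i => ω i t).adjugate := by
      funext t
      rw [Matrix.inv_def, Ring.inverse_eq_inv']
    rw [heq]
    exact (hdc.continuousOn.inv₀ fun t ht => hdet t ht).smul
      hgc.matrix_adjugate.continuousOn
  have hMc : Continuous fun t =>
      Matrix.of (fun j k => (inner ℂ (ω j t) (a t (ω k t)) : ℂ)) := by
    apply continuous_matrix
    intro j k
    have h1 := hw (ω k) (hωΩ k) (ω j) (hωΩ j)
    exact (continuous_star.comp h1).congr fun t => inner_conj_symm _ _
  have hDc : ContinuousOn D U := (hinvc.mul hMc.continuousOn).mul hinvc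
  have hDce : ∀ i l, ContinuousOn (fun t => D t i l) U := by
    intro i l
    have h1 : Continuous fun m : Matrix (Fin n) (Fin n) ℂ => m i l :=
      continuous_id.matrix_elem i l
    exact h1.comp_continuousOn hDc
  -- bump function
  obtain ⟨K, hK, htK, hKU⟩ := exists_compact_subset hU htU₀
  obtain ⟨K', hK', htK', hK'K⟩ := exists_compact_subset isOpen_interior htK
  obtain ⟨f, hf1, hf0, hfc, hf01⟩ := exists_continuous_one_zero_of_isCompact hK'
    isOpen_interior.isClosed_compl (disjoint_compl_right_iff.mpr hK'K)
  have hsupp : tsupport (⇑f) ⊆ U := by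
    have h1 : Function.support (⇑f) ⊆ interior K := by
      intro x hx
      by_contra hxK
      exact hx (hf0 hxK)
    calc tsupport (⇑f) ⊆ closure (interior K) := closure_mono h1
      _ ⊆ K := (hK.isClosed.closure_subset_iff).mpr interior_subset
      _ ⊆ U := hKU
  -- scalar coefficient functions
  set g : Fin n → Fin n → T → ℂ :=
    fun i l t => if t ∈ U then ((f t : ℝ) : ℂ) * D t i l else 0 with hgdef
  have hgcont : ∀ i l, Continuous (g i l) := fun i l =>
    glue_cont hU f.continuous hsupp (hDce i l)
  have hgvan : ∀ i l, ∀ t ∉ tsupport (⇑f), g i l t = 0 := by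
    intro i l t ht
    have hft : f t = 0 := image_eq_zero_of_notMem_tsupport ht
    simp only [hgdef, hft]
    split <;> norm_num
  have hfvan : ∀ t ∉ tsupport (⇑f), ((f t : ℝ) : ℂ) = 0 := by
    intro t ht
    rw [image_eq_zero_of_notMem_tsupport ht]
    norm_num
  -- the vector fields
  set ω' : (Fin n × Fin n) → ∀ t, H t := fun q t => g q.1 q.2 t • ω q.1 t with hω'def
  set ν' : (Fin n × Fin n) → ∀ t, H t := fun q t => ((f t : ℝ) : ℂ) • ω q.2 t with hν'def
  have hω'm : ∀ q, ω' q ∈ omega0 Ω := fun q =>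
    mem_omega0 hΩ (hgcont q.1 q.2) hfc (hgvan q.1 q.2) (hωΩ q.1)
  have hν'm : ∀ q, ν' q ∈ omega0 Ω := fun q =>
    mem_omega0 hΩ (Complex.continuous_ofReal.comp f.continuous) hfc hfvan (hωΩ q.2)
  -- reindex along Fin (n * n)
  set e2 : Fin n × Fin n ≃ Fin (n * n) := finProdFinEquiv with he2
  set κ : ∀ t, H t →L[ℂ] H t :=
    fun t => ∑ q : Fin (n * n), rankOneField (ω' (e2.symm q)) (ν' (e2.symm q)) t with hκdef
  have hκmem : κ ∈ finRankFields (omega0 Ω) :=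
    ⟨n * n, fun q => ω' (e2.symm q), fun q => ν' (e2.symm q),
      fun q => hω'm _, fun q => hν'm _, rfl⟩
  refine ⟨interior K', isOpen_interior, htK', κ, hκmem, ?_⟩
  intro t ht
  have htK'' : t ∈ K' := interior_subset ht
  have htU : t ∈ U := hKU (interior_subset (hK'K htK''))
  have hft : f t = 1 := hf1 htK''
  -- identify κ t with the compression
  have hterm : ∀ q : Fin n × Fin n, rankOneField (ω' q) (ν' q) t
      = D t q.1 q.2 • rk (ω q.1 t) (ω q.2 t) := by
    rintro ⟨i, l⟩
    rw [rankOneField_eq]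
    show rk (g i l t • ω i t) (((f t : ℝ) : ℂ) • ω l t) = _
    rw [rk_smul_left, rk_smul_right]
    have hgt : g i l t = D t i l := by
      simp only [hgdef]
      rw [if_pos htU, hft]
      norm_num
    rw [hgt, hft]
    norm_num
  have hκt : κ t = ∑ i, ∑ l, D t i l • rk (ω i t) (ω l t) := by
    show (∑ q : Fin (n * n), rankOneField (ω' (e2.symm q)) (ν' (e2.symm q)) t) = _
    rw [Equiv.sum_comp e2.symm (fun q => rankOneField (ω' q) (ν' q) t)]
    rw [Fintype.sum_prod_type]
    exact Finset.sum_congr rfl fun i _ => Finset.sum_congr rfl fun l _ => hterm (i, l)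
  have hcomp : gramProj (fun i => ω i t) * a t * gramProj (fun i => ω i t)
      = ∑ i, ∑ l, D t i l • rk (ω i t) (ω l t) := by
    ext x
    have h := gramProj_comp_eq (fun i => ω i t) (a t) x
    simpa [ContinuousLinearMap.mul_apply, ContinuousLinearMap.sum_apply,
      ContinuousLinearMap.smul_apply] using h
  calc ‖κ t - a t‖
      = ‖gramProj (fun i => ω i t) * a t * gramProj (fun i => ω i t) - a t‖ := by
        rw [hκt, ← hcomp]
    _ < ε / 2 := hPap t htU
    _ < ε := by linarith

end FellAux

end FellAux5

/-- Lemma `C=A`.  Let `A = A(T, {H_t}, Ω)` be the Fell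
C*-algebra of a continuous Hilbert bundle over a locally compact Hausdorff
space `T`.  Then `A = C₀(T, {K(H_t)}, F(Ω₀))`: an operator field `a` whose
pointwise norm function lies in `C₀(T)` belongs to `A` iff `a t` is a compact
operator for every `t` and `a` is a local uniform limit of finite-rank fields
from `F(Ω₀)`, where `Ω₀ = {ω ∈ Ω : ‖ω(·)‖ ∈ C₀(T)}`. -/
theorem fellAlgebra_eq_C0_sections
    {T : Type} [TopologicalSpace T] [LocallyCompactSpace T] [T2Space T]
    {H : T → Type} [∀ t, NormedAddCommGroup (H t)] [∀ t, InnerProductSpace ℂ (H t)]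
    [∀ t, CompleteSpace (H t)]
    (Ω : Set (∀ t, H t)) (hΩ : IsCtsHilbertBundle Ω)
    (a : ∀ t, H t →L[ℂ] H t)
    (ha_norm : Continuous fun t => ‖a t‖)
    (ha_c0 : Filter.Tendsto (fun t => ‖a t‖) (Filter.cocompact T) (nhds 0)) :
    a ∈ FellAlgebra Ω ↔
      ((∀ t, IsCompactOperator (a t : H t → H t)) ∧
        LocUnifApprox
          (finRankFields {ω ∈ Ω |
            Filter.Tendsto (fun t => ‖ω t‖) (Filter.cocompact T) (nhds 0)}) a) := by
  constructor
  · rintro ⟨hw, hafd, -, -⟩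
    exact ⟨fun t => FellAux.forward_compact hafd t,
      FellAux.forward_locUnifApprox hΩ hw hafd⟩
  · rintro ⟨hcpt, happ⟩
    exact ⟨FellAux.backward_weaklyCts hΩ happ,
      FellAux.backward_almostFinDim hΩ happ, ha_norm, ha_c0⟩
end

section
/- Let A be the Fell C*-algebra of a continuous Hilbert bundle (T, {H_t}, Ω) over a locally compact Hausdorff space T and let I ⊆ J be essential ideals of A. If x is a bounded operator field on X^J (x(t) ∈ B(H_t)) that is strictly continuous with respect to F((Ω|_{X^J})₀), then the restriction of x to X^I is strictly continuous with respect to F((Ω|_{X^I})₀); moreover the induced map M(J) → M(I), x ↦ x|_{X^I}, is an injective *-homomorphism. -/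
/-! ### Auxiliary lemmas -/

noncomputable section AuxLemmas

open Filter Topology Set

variable {T : Type*} [TopologicalSpace T] {H : T → Type*}
  [∀ t, NormedAddCommGroup (H t)] [∀ t, InnerProductSpace ℂ (H t)]

/-- `Ω` is closed under `μ + c • ν` for constants `c`. -/
theorem IsCtsHilbertBundle.combo_mem {Ω : Set (∀ t, H t)} (hΩ : IsCtsHilbertBundle Ω)
    {μ ν : ∀ t, H t} (hμ : μ ∈ Ω) (hν : ν ∈ Ω) (c : ℂ) :
    (fun t => μ t + c • ν t) ∈ Ω :=
  hΩ.add_mem μ hμ _ (hΩ.smul_mem (ContinuousMap.const T c) ν hν)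

/-- Polarization: pointwise inner ℂ products of fields in `Ω` are continuous. -/
theorem IsCtsHilbertBundle.inner_cont {Ω : Set (∀ t, H t)} (hΩ : IsCtsHilbertBundle Ω)
    {μ ν : ∀ t, H t} (hμ : μ ∈ Ω) (hν : ν ∈ Ω) :
    Continuous fun t => (inner ℂ (μ t) (ν t) : ℂ) := by
  have key : ∀ c : ℂ, Continuous fun t => ((‖μ t + c • ν t‖ : ℝ) : ℂ) := fun c =>
    Complex.continuous_ofReal.comp (hΩ.norm_continuous _ (hΩ.combo_mem hμ hν c))
  have hc : Continuous fun t =>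
      ((((‖μ t + (1 : ℂ) • ν t‖ : ℝ) : ℂ)) ^ 2 - (((‖μ t + (-1 : ℂ) • ν t‖ : ℝ) : ℂ)) ^ 2 +
        ((((‖μ t + (-Complex.I) • ν t‖ : ℝ) : ℂ)) ^ 2 -
          (((‖μ t + Complex.I • ν t‖ : ℝ) : ℂ)) ^ 2) * Complex.I) / 4 :=
    (((((key 1).pow 2).sub ((key (-1)).pow 2)).add
      ((((key (-Complex.I)).pow 2).sub ((key Complex.I).pow 2)).mul continuous_const)).div_const 4)
  refine hc.congr fun t => ?_
  have hpol := inner_eq_sum_norm_sq_div_four (𝕜 := ℂ) (μ t) (ν t)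
  simp only [RCLike.I_to_complex] at hpol
  have e1 : μ t + (1 : ℂ) • ν t = μ t + ν t := by rw [one_smul]
  have e2 : μ t + (-1 : ℂ) • ν t = μ t - ν t := by rw [neg_one_smul, ← sub_eq_add_neg]
  have e3 : μ t + (-Complex.I) • ν t = μ t - Complex.I • ν t := by
    rw [neg_smul, ← sub_eq_add_neg]
  rw [hpol, e1, e2, e3]
  norm_num

theorem rankOneField_apply (ω ν : ∀ t, H t) (t : T) (ξ : H t) :
    rankOneField ω ν t ξ = (inner ℂ (ν t) ξ : ℂ) • ω t := rfl

theorem rankOneField_def (ω ν : ∀ t, H t) (t : T) :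
    rankOneField ω ν t = (innerSL ℂ (ν t)).smulRight (ω t) := rfl

theorem norm_rankOneField (ω ν : ∀ t, H t) (t : T) :
    ‖rankOneField ω ν t‖ = ‖ν t‖ * ‖ω t‖ := by
  rw [rankOneField_def, ContinuousLinearMap.norm_smulRight_apply, innerSL_apply_norm]

/-- The orthogonal projection onto the line spanned by `u ≠ 0`, together with all
the properties needed for `AlmostFinDim`. -/
theorem projOne_spec {E : Type*} [NormedAddCommGroup E] [InnerProductSpace ℂ E]
    [CompleteSpace E] {u : E} (hu : u ≠ 0) :
    ∃ p : E →L[ℂ] E, IsIdempotentElem p ∧ IsSelfAdjoint p ∧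
      LinearMap.range (p : E →ₗ[ℂ] E) = Submodule.span ℂ {u} ∧
      p * (innerSL ℂ u).smulRight u * p = (innerSL ℂ u).smulRight u := by
  haveI : FiniteDimensional ℂ (Submodule.span ℂ {u}) :=
    FiniteDimensional.span_of_finite ℂ (Set.finite_singleton u)
  haveI : CompleteSpace (Submodule.span ℂ {u}) := FiniteDimensional.complete ℂ _
  set U : Submodule ℂ E := Submodule.span ℂ {u} with hUdef
  set p : E →L[ℂ] E := U.subtypeL ∘L U.orthogonalProjection with hpdef
  have hpmem : ∀ ξ, p ξ ∈ U := fun ξ => (U.orthogonalProjection ξ).2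
  have hproj : ∀ v ∈ U, p v = v := fun v hv => Submodule.starProjection_eq_self_iff.2 hv
  have humem : u ∈ U := Submodule.mem_span_singleton_self u
  have hpu : p u = u := hproj u humem
  have hsa : IsSelfAdjoint p := isSelfAdjoint_starProjection U
  have hsymm : ∀ ξ η, (inner ℂ (p ξ) η : ℂ) = inner ℂ ξ (p η) :=
    (ContinuousLinearMap.isSelfAdjoint_iff_isSymmetric.1 hsa)
  have hidem : IsIdempotentElem p :=
    ContinuousLinearMap.ext fun ξ => hproj (p ξ) (hpmem ξ)
  refine ⟨p, hidem, hsa, ?_, ?_⟩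
  · apply le_antisymm
    · rintro z hz
      obtain ⟨ξ, rfl⟩ := LinearMap.mem_range.1 hz
      exact hpmem ξ
    · rw [Submodule.span_le, Set.singleton_subset_iff]
      exact LinearMap.mem_range.2 ⟨u, hpu⟩
  · refine ContinuousLinearMap.ext fun ξ => ?_
    have hθ : ∀ η, ((innerSL ℂ u).smulRight u) η = (inner ℂ u η : ℂ) • u := fun _ => rfl
    show p (((innerSL ℂ u).smulRight u) (p ξ)) = ((innerSL ℂ u).smulRight u) ξ
    rw [hθ, map_smul, hpu, hθ]
    congr 1
    have hkey := hsymm u ξ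
    rw [hpu] at hkey
    exact hkey.symm

/-- A compactly supported rank-one field `Θ_{μ,μ}` with `μ ∈ Ω` belongs to the
Fell algebra. -/
theorem theta_mem_fell [∀ t, CompleteSpace (H t)] {Ω : Set (∀ t, H t)}
    (hΩ : IsCtsHilbertBundle Ω) {μ : ∀ t, H t} (hμ : μ ∈ Ω) {K : Set T}
    (hK : IsCompact K) (h0 : ∀ t ∉ K, μ t = 0) :
    (fun t => rankOneField μ μ t) ∈ FellAlgebra Ω := by
  have hnorm : Continuous fun t => ‖μ t‖ := hΩ.norm_continuous μ hμ
  refine ⟨?_, ?_, ?_, ?_⟩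
  · -- weakly continuous
    intro ω₁ hω₁ ω₂ hω₂
    refine ((hΩ.inner_cont hω₁ hμ).mul (hΩ.inner_cont hμ hω₂)).congr fun t => ?_
    rw [rankOneField_apply, inner_smul_left, ← inner_conj_symm (μ t) (ω₁ t), Complex.conj_conj]
    rfl
  · -- almost finite dimensional
    intro t₀ ε hε
    by_cases h : μ t₀ = 0
    · refine ⟨{t | ‖μ t‖ * ‖μ t‖ < ε}, isOpen_lt (hnorm.mul hnorm) continuous_const,
        by simpa [h] using hε, 0, fun i => i.elim0, fun i => i.elim0, fun t ht => ?_⟩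
      refine ⟨linearIndependent_empty_type, 0, IsIdempotentElem.zero, IsSelfAdjoint.zero _, ?_, ?_⟩
      · rw [Set.range_eq_empty, Submodule.span_empty]
        ext z
        simp only [LinearMap.mem_range, Submodule.mem_bot]
        constructor
        · rintro ⟨ξ, rfl⟩; rfl
        · rintro rfl; exact ⟨0, rfl⟩
      · have : (0 : H t →L[ℂ] H t) * rankOneField μ μ t * 0 - rankOneField μ μ t
            = -rankOneField μ μ t := by simp
        rw [this, norm_neg, norm_rankOneField]
        exact ht
    · refine ⟨{t | μ t ≠ 0}, ?_, h, 1, fun _ => μ, fun _ => hμ, fun t ht => ?_⟩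
      · have : {t | μ t ≠ 0} = (fun t => ‖μ t‖) ⁻¹' ({0}ᶜ) := by
          ext t; simp
        rw [this]
        exact isOpen_compl_singleton.preimage hnorm
      · obtain ⟨p, hidem, hsa, hrange, hθ⟩ := projOne_spec ht
        refine ⟨LinearIndependent.of_subsingleton 0 ht, p, hidem, hsa, ?_, ?_⟩
        · rw [hrange]
          congr 1
          simp [Set.range_const]
        · show ‖p * rankOneField μ μ t * p - rankOneField μ μ t‖ < ε
          rw [rankOneField_def, hθ, sub_self, norm_zero]
          exact hε
  · -- continuity of the norm
    exact (hnorm.mul hnorm).congr fun t => (norm_rankOneField μ μ t).symm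
  · -- vanishing at infinity
    refine tendsto_const_nhds.congr' (Filter.eventuallyEq_of_mem
      (Filter.mem_cocompact.2 ⟨K, hK, subset_rfl⟩) fun t ht => ?_)
    simp [norm_rankOneField, h0 t ht]

theorem isOpen_idealSupp' {Ω : Set (∀ t, H t)} [∀ t, CompleteSpace (H t)]
    {I : Set (∀ t, H t →L[ℂ] H t)} (hsub : I ⊆ FellAlgebra Ω) :
    IsOpen (idealSupp I) := by
  have : idealSupp I = ⋃ b ∈ I, {t | b t ≠ 0} := by
    ext t; simp [idealSupp]
  rw [this]
  refine isOpen_biUnion fun b hb => ?_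
  have hc : Continuous fun t => ‖b t‖ := (hsub hb).2.2.1
  have : {t | b t ≠ 0} = (fun t => ‖b t‖) ⁻¹' ({0}ᶜ) := by ext t; simp
  rw [this]
  exact isOpen_compl_singleton.preimage hc

/-- A bump function: `1` on a neighbourhood of `t₀`, vanishing outside a compact
subset of the open set `V`. -/
theorem exists_bump {T : Type*} [TopologicalSpace T] [LocallyCompactSpace T] [T2Space T]
    {V : Set T} (hV : IsOpen V) {t₀ : T} (ht₀ : t₀ ∈ V) :
    ∃ (g : C(T, ℝ)) (K : Set T), IsCompact K ∧ K ⊆ V ∧ (∀ t ∉ K, g t = 0) ∧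
      ∃ W : Set T, IsOpen W ∧ t₀ ∈ W ∧ ∀ t ∈ W, g t = 1 := by
  obtain ⟨K2, hK2c, ht₀K2, hK2V⟩ := exists_compact_subset hV ht₀
  obtain ⟨K1, hK1c, ht₀K1, hK1K2⟩ := exists_compact_subset isOpen_interior ht₀K2
  obtain ⟨g, hg1, hg0, -, -⟩ := exists_continuous_one_zero_of_isCompact hK1c
    isOpen_interior.isClosed_compl (Set.disjoint_left.2 fun a ha hc => hc (hK1K2 ha))
  exact ⟨g, K2, hK2c, hK2V, fun t ht => hg0 fun h => ht (interior_subset h),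
    interior K1, isOpen_interior, ht₀K1, fun t ht => hg1 (interior_subset ht)⟩

/-- Density of `X^I` in `X^J` for an essential ideal `I` and any ideal `J`. -/
theorem supp_dense {T : Type*} [TopologicalSpace T] [LocallyCompactSpace T] [T2Space T]
    {H : T → Type*} [∀ t, NormedAddCommGroup (H t)] [∀ t, InnerProductSpace ℂ (H t)]
    [∀ t, CompleteSpace (H t)] {Ω : Set (∀ t, H t)} (hΩ : IsCtsHilbertBundle Ω)
    {I J : Set (∀ t, H t →L[ℂ] H t)}
    (hI : IsEssentialIdealOf (FellAlgebra Ω) I)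
    (hJ : IsIdealOf (FellAlgebra Ω) J)
    {t₀ : T} (ht₀ : t₀ ∈ idealSupp J) :
    t₀ ∈ closure (idealSupp I) := by
  by_contra hcl
  obtain ⟨b₀, hb₀J, hb₀⟩ := ht₀
  -- a vector moved by `b₀ t₀`
  have hξ : ∃ ξ₀, b₀ t₀ ξ₀ ≠ 0 := by
    by_contra hcon
    push_neg at hcon
    exact hb₀ (ContinuousLinearMap.ext fun ξ => by simp [hcon ξ])
  obtain ⟨ξ₀, hξ₀⟩ := hξ
  set w : H t₀ := b₀ t₀ ξ₀ with hwdef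
  obtain ⟨ω, hωΩ, hωt₀⟩ := hΩ.full t₀ w
  -- bump supported away from `closure (idealSupp I)`
  obtain ⟨g, K, hKc, hKV, hg0, W, -, ht₀W, hgW⟩ :=
    exists_bump (isOpen_compl_iff.2 isClosed_closure) hcl
  set μ : ∀ t, H t := fun t => ((g t : ℝ) : ℂ) • ω t with hμdef
  have hμΩ : μ ∈ Ω :=
    hΩ.smul_mem ⟨fun t => ((g t : ℝ) : ℂ), Complex.continuous_ofReal.comp g.continuous⟩ ω hωΩ
  have hμ0 : ∀ t ∉ K, μ t = 0 := fun t ht => by simp [hμdef, hg0 t ht]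
  have hcA : (fun t => rankOneField μ μ t) ∈ FellAlgebra Ω := theta_mem_fell hΩ hμΩ hKc hμ0
  set e : ∀ t, H t →L[ℂ] H t := (fun t => rankOneField μ μ t) * b₀ with hedef
  have heJ : e ∈ J := hJ.mul_mem_left _ hcA b₀ hb₀J
  -- the ideal of elements of `J` vanishing on `closure (idealSupp I)`
  set E : Set (∀ t, H t →L[ℂ] H t) :=
    {a | a ∈ J ∧ ∀ t ∈ closure (idealSupp I), a t = 0} with hEdef
  have hEideal : IsIdealOf (FellAlgebra Ω) E := by
    refine ⟨fun a ha => hJ.subset ha.1, ⟨hJ.zero_mem, fun t _ => rfl⟩,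
      fun a ha b hb => ⟨hJ.add_mem a ha.1 b hb.1, fun t ht => ?_⟩,
      fun c a ha => ⟨hJ.smul_mem c a ha.1, fun t ht => ?_⟩,
      fun a ha => ⟨hJ.star_mem a ha.1, fun t ht => ?_⟩,
      fun a haA b hb => ⟨hJ.mul_mem_left a haA b hb.1, fun t ht => ?_⟩,
      fun a ha b hbA => ⟨hJ.mul_mem_right a ha.1 b hbA, fun t ht => ?_⟩,
      fun a haA happ => ⟨hJ.norm_closed a haA
        (fun ε hε => (happ ε hε).imp fun b hb => ⟨hb.1.1, hb.2⟩), fun t ht => ?_⟩⟩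
    · show a t + b t = 0
      rw [ha.2 t ht, hb.2 t ht, add_zero]
    · show c • a t = 0
      rw [ha.2 t ht, smul_zero]
    · show star (a t) = 0
      rw [ha.2 t ht, star_zero]
    · show a t * b t = 0
      rw [hb.2 t ht, mul_zero]
    · show a t * b t = 0
      rw [ha.2 t ht, zero_mul]
    · by_contra hne
      have hpos : 0 < ‖a t‖ := norm_pos_iff.2 hne
      obtain ⟨b, hbE, hlt⟩ := happ _ hpos
      have := hlt t
      rw [hbE.2 t ht, sub_zero] at this
      exact lt_irrefl _ this
  have heE : e ∈ E := by
    refine ⟨heJ, fun t ht => ?_⟩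
    have htK : t ∉ K := fun hK' => (hKV hK') ht
    show rankOneField μ μ t * b₀ t = 0
    have : rankOneField μ μ t = 0 :=
      ContinuousLinearMap.ext fun ξ => by simp [rankOneField_apply, hμ0 t htK]
    rw [this, zero_mul]
  have hene : e ≠ 0 := by
    intro hcon
    have h1 : g t₀ = 1 := hgW t₀ ht₀W
    have hμt₀ : μ t₀ = w := by rw [hμdef]; simp [h1, hωt₀]
    have : e t₀ ξ₀ = (inner ℂ w w : ℂ) • w := by
      show rankOneField μ μ t₀ (b₀ t₀ ξ₀) = _
      rw [rankOneField_apply, hμt₀, ← hwdef]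
    rw [hcon] at this
    have hww : (inner ℂ w w : ℂ) ≠ 0 := inner_self_ne_zero.2 hξ₀
    exact (smul_ne_zero hww hξ₀) (by simpa using this.symm)
  obtain ⟨c', hc'I, hc'E, hc'ne⟩ := hI.2 E hEideal ⟨e, heE, hene⟩
  obtain ⟨t, htne⟩ := Function.ne_iff.1 hc'ne
  exact htne (hc'E.2 t (subset_closure ⟨c', hc'I, htne⟩))

/-- A compactly supported scalar multiple of a field of `Ω`, restricted to `X ⊇ K`,
lies in `(Ω|_X)₀`. -/
theorem smulField_mem_rest {Ω : Set (∀ t, H t)} (hΩ : IsCtsHilbertBundle Ω)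
    {X : Set T} {ω : ∀ t, H t} (hω : ω ∈ Ω) (g : C(T, ℝ)) {K : Set T}
    (hK : IsCompact K) (hKX : K ⊆ X) (hg : ∀ t ∉ K, g t = 0) :
    (fun x : X => ((g x.1 : ℝ) : ℂ) • ω x.1) ∈
      {ω' : ∀ x : X, H x.1 | ∃ ω₀ ∈ Ω, (∀ x : X, ω' x = ω₀ x.1) ∧
        Filter.Tendsto (fun x : X => ‖ω₀ x.1‖) (Filter.cocompact X) (nhds 0)} := by
  refine ⟨fun t => ((g t : ℝ) : ℂ) • ω t,
    hΩ.smul_mem ⟨fun t => ((g t : ℝ) : ℂ), Complex.continuous_ofReal.comp g.continuous⟩ ω hω,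
    fun x => rfl, ?_⟩
  have hKc : IsCompact (Subtype.val ⁻¹' K : Set X) := by
    rw [Subtype.isCompact_iff, Set.image_preimage_eq_inter_range, Subtype.range_val,
      Set.inter_eq_self_of_subset_left hKX]
    exact hK
  refine tendsto_const_nhds.congr' (Filter.eventuallyEq_of_mem
    (Filter.mem_cocompact.2 ⟨_, hKc, subset_rfl⟩) fun x hx => ?_)
  have : g x.1 = 0 := hg x.1 hx
  simp [this]

/-- Continuity of `s ↦ ⟪ζ s, (b s) (η s)⟫` for `b` a finite-rank field over `X`
and `ζ, η ∈ Ω`. -/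
theorem inner_finRank_cont {Ω : Set (∀ t, H t)} (hΩ : IsCtsHilbertBundle Ω)
    {X : Set T} {b : ∀ x : X, H x.1 →L[ℂ] H x.1}
    (hb : b ∈ finRankFields {ω' : ∀ x : X, H x.1 | ∃ ω₀ ∈ Ω, (∀ x : X, ω' x = ω₀ x.1) ∧
      Filter.Tendsto (fun x : X => ‖ω₀ x.1‖) (Filter.cocompact X) (nhds 0)})
    {ζ η : ∀ t, H t} (hζ : ζ ∈ Ω) (hη : η ∈ Ω) :
    Continuous fun x : X => (inner ℂ (ζ x.1) (b x (η x.1)) : ℂ) := by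
  obtain ⟨m, ρ', σ', hρ, hσ, rfl⟩ := hb
  choose ρ hρΩ hρeq using hρ
  choose σ hσΩ hσeq using hσ
  have hcont : Continuous fun x : X =>
      ∑ j, (inner ℂ (σ j x.1) (η x.1) : ℂ) * (inner ℂ (ζ x.1) (ρ j x.1) : ℂ) :=
    continuous_finset_sum _ fun j _ =>
      ((hΩ.inner_cont (hσΩ j) hη).comp continuous_subtype_val).mul
        ((hΩ.inner_cont hζ (hρΩ j)).comp continuous_subtype_val)
  refine hcont.congr fun x => ?_
  rw [ContinuousLinearMap.sum_apply, inner_sum]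
  refine (Finset.sum_congr rfl fun j _ => ?_).symm
  rw [rankOneField_apply, inner_smul_right, (hρeq j).1 x, (hσeq j).1 x]

end AuxLemmas

/-- Let `A` be the Fell C*-algebra of a continuous Hilbert
bundle over `T` and `I ⊆ J` essential ideals of `A`.  If a bounded operator
field `x` on `X^J` is strictly continuous w.r.t. `F((Ω|_{X^J})₀)`, then its
restriction to `X^I` is strictly continuous w.r.t. `F((Ω|_{X^I})₀)`; the
induced map `M(J) → M(I)` is an injective *-homomorphism. -/
theorem multiplier_restriction_monomorphism
    {T : Type} [TopologicalSpace T] [LocallyCompactSpace T] [T2Space T]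
    {H : T → Type} [∀ t, NormedAddCommGroup (H t)] [∀ t, InnerProductSpace ℂ (H t)]
    [∀ t, CompleteSpace (H t)]
    (Ω : Set (∀ t, H t)) (hΩ : IsCtsHilbertBundle Ω)
    (I J : Set (∀ t, H t →L[ℂ] H t))
    (hI : IsEssentialIdealOf (FellAlgebra Ω) I)
    (hJ : IsEssentialIdealOf (FellAlgebra Ω) J)
    (hIJ : I ⊆ J)
    (hX : (idealSupp I : Set T) ⊆ idealSupp J) :
    -- `(Ω|_X)₀` and the associated `F((Ω|_X)₀)`, for `X = X^I, X^J`: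
    letI restΩ₀ : (X : Set T) → Set (∀ x : X, H x.1) := fun X =>
      {ω' | ∃ ω ∈ Ω, (∀ x : X, ω' x = ω x.1) ∧
        Filter.Tendsto (fun x : X => ‖ω x.1‖) (Filter.cocompact X) (nhds 0)}
    letI res : (∀ x : idealSupp J, H x.1 →L[ℂ] H x.1) →
        (∀ x : idealSupp I, H x.1 →L[ℂ] H x.1) := fun x t => x ⟨t.1, hX t.2⟩
    -- restriction carries `M(J)` into `M(I)` …
    (∀ x ∈ MultSet (finRankFields (restΩ₀ (idealSupp J))),
      res x ∈ MultSet (finRankFields (restΩ₀ (idealSupp I)))) ∧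
    -- … is a *-homomorphism …
    (∀ x y, res (x + y) = res x + res y) ∧
    (∀ (c : ℂ) x, res (c • x) = c • res x) ∧
    (∀ x y, res (x * y) = res x * res y) ∧
    (∀ x, res (star x) = star (res x)) ∧
    -- … and is injective on `M(J)`:
    (∀ x ∈ MultSet (finRankFields (restΩ₀ (idealSupp J))),
      ∀ y ∈ MultSet (finRankFields (restΩ₀ (idealSupp J))),
        res x = res y → x = y) := by
  have hXIopen : IsOpen (idealSupp I) := isOpen_idealSupp' hI.1.subset
  have hXJopen : IsOpen (idealSupp J) := isOpen_idealSupp' hJ.1.subset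
  refine ⟨?_, fun x y => rfl, fun c x => rfl, fun x y => rfl, fun x => rfl, ?_⟩
  · -- restriction maps M(J) into M(I)
    rintro x ⟨⟨C, hC⟩, hsc⟩
    refine ⟨⟨C, fun t => hC _⟩, ?_⟩
    rintro t₀ a ⟨n, ω', ν', hω', hν', rfl⟩ ε hε
    choose ωs hωsΩ hωs using hω'
    choose νs hνsΩ hνs using hν'
    obtain ⟨g, K, hKc, hKI, hg0, W, hWo, ht₀W, hgW⟩ := exists_bump hXIopen t₀.2
    have hKJ : K ⊆ idealSupp J := fun t ht => hX (hKI ht)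
    have haJ : (fun s : idealSupp J => ∑ i, rankOneField
        (fun s : idealSupp J => ((g s.1 : ℝ) : ℂ) • ωs i s.1)
        (fun s : idealSupp J => ((g s.1 : ℝ) : ℂ) • νs i s.1) s)
        ∈ finRankFields {ω'' : ∀ x : idealSupp J, H x.1 | ∃ ω₀ ∈ Ω,
          (∀ x : idealSupp J, ω'' x = ω₀ x.1) ∧
          Filter.Tendsto (fun x : idealSupp J => ‖ω₀ x.1‖)
            (Filter.cocompact (idealSupp J)) (nhds 0)} :=
      ⟨n, _, _, fun i => smulField_mem_rest hΩ (hωsΩ i) g hKc hKJ hg0,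
        fun i => smulField_mem_rest hΩ (hνsΩ i) g hKc hKJ hg0, rfl⟩
    obtain ⟨U', hU'o, hs₀U', b', hb'F, hbnd⟩ := hsc ⟨t₀.1, hX t₀.2⟩ _ haJ ε hε
    obtain ⟨m, ρ', σ', hρ', hσ', rfl⟩ := hb'F
    choose ρs hρsΩ hρs using hρ'
    choose σs hσsΩ hσs using hσ'
    refine ⟨{t : idealSupp I | t.1 ∈ W ∧ (⟨t.1, hX t.2⟩ : idealSupp J) ∈ U'}, ?_, ⟨ht₀W, hs₀U'⟩,
      fun t : idealSupp I => ∑ j, rankOneField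
        (fun t : idealSupp I => ((g t.1 : ℝ) : ℂ) • ρs j t.1)
        (fun t : idealSupp I => ((g t.1 : ℝ) : ℂ) • σs j t.1) t,
      ⟨m, _, _, fun j => smulField_mem_rest hΩ (hρsΩ j) g hKc hKI hg0,
        fun j => smulField_mem_rest hΩ (hσsΩ j) g hKc hKI hg0, rfl⟩, ?_⟩
    · exact (hWo.preimage continuous_subtype_val).inter
        (hU'o.preimage (continuous_subtype_val.subtype_mk _))
    · rintro t ⟨htW, htU'⟩
      have hg1 : g t.1 = 1 := hgW t.1 htW
      have hbnd' := hbnd ⟨t.1, hX t.2⟩ htU'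
      have he1 : (∑ i, rankOneField (fun s : idealSupp J => ((g s.1 : ℝ) : ℂ) • ωs i s.1)
          (fun s : idealSupp J => ((g s.1 : ℝ) : ℂ) • νs i s.1) (⟨t.1, hX t.2⟩ : idealSupp J))
          = ∑ i, rankOneField (ω' i) (ν' i) t := by
        refine Finset.sum_congr rfl fun i _ => ?_
        rw [rankOneField_def, rankOneField_def, (hωs i).1 t, (hνs i).1 t]
        show (innerSL ℂ (((g t.1 : ℝ) : ℂ) • νs i t.1)).smulRight
            (((g t.1 : ℝ) : ℂ) • ωs i t.1) = _
        rw [hg1]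
        simp
      have he2 : (∑ j, rankOneField (fun t : idealSupp I => ((g t.1 : ℝ) : ℂ) • ρs j t.1)
          (fun t : idealSupp I => ((g t.1 : ℝ) : ℂ) • σs j t.1) t)
          = ∑ j, rankOneField (ρ' j) (σ' j) (⟨t.1, hX t.2⟩ : idealSupp J) := by
        refine Finset.sum_congr rfl fun j _ => ?_
        rw [rankOneField_def, rankOneField_def, (hρs j).1 ⟨t.1, hX t.2⟩,
          (hσs j).1 ⟨t.1, hX t.2⟩]
        show (innerSL ℂ (((g t.1 : ℝ) : ℂ) • σs j t.1)).smulRight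
            (((g t.1 : ℝ) : ℂ) • ρs j t.1) = _
        rw [hg1]
        simp
      simpa only [he2, ← he1] using hbnd'
  · -- injectivity
    rintro x hx y hy hxy
    funext s₀
    refine ContinuousLinearMap.ext fun v => ?_
    by_contra hne
    set w : H s₀.1 := x s₀ v - y s₀ v with hwdef
    have hw0 : w ≠ 0 := sub_ne_zero.2 hne
    have hwpos : 0 < ‖w‖ := norm_pos_iff.2 hw0
    have hden : (s₀.1 : T) ∈ closure (idealSupp I) := supp_dense hΩ hI hJ.1 s₀.2
    obtain ⟨ω, hωΩ, hωeq⟩ := hΩ.full s₀.1 v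
    obtain ⟨ν, hνΩ, hνeq⟩ := hΩ.full s₀.1 w
    obtain ⟨g, K, hKc, hKJ, hg0, W, hWo, hs₀W, hgW⟩ := exists_bump hXJopen s₀.2
    set gω : ∀ t, H t := fun t => ((g t : ℝ) : ℂ) • ω t with hgωdef
    set gν : ∀ t, H t := fun t => ((g t : ℝ) : ℂ) • ν t with hgνdef
    have hgωΩ : gω ∈ Ω := hΩ.smul_mem
      ⟨fun t => ((g t : ℝ) : ℂ), Complex.continuous_ofReal.comp g.continuous⟩ ω hωΩ
    have hgνΩ : gν ∈ Ω := hΩ.smul_mem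
      ⟨fun t => ((g t : ℝ) : ℂ), Complex.continuous_ofReal.comp g.continuous⟩ ν hνΩ
    set a : ∀ s : idealSupp J, H s.1 →L[ℂ] H s.1 :=
      fun s => ∑ _i : Fin 1, rankOneField (fun s : idealSupp J => gω s.1)
        (fun s : idealSupp J => gν s.1) s with hadef
    have haF : a ∈ finRankFields {ω'' : ∀ x : idealSupp J, H x.1 | ∃ ω₀ ∈ Ω,
        (∀ x : idealSupp J, ω'' x = ω₀ x.1) ∧
        Filter.Tendsto (fun x : idealSupp J => ‖ω₀ x.1‖)
          (Filter.cocompact (idealSupp J)) (nhds 0)} :=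
      ⟨1, _, _, fun _ => smulField_mem_rest hΩ hωΩ g hKc hKJ hg0,
        fun _ => smulField_mem_rest hΩ hνΩ g hKc hKJ hg0, rfl⟩
    set ε : ℝ := ‖w‖ ^ 2 / 4 with hεdef
    have hε2 : 0 < ε / 2 := by positivity
    obtain ⟨U₁, hU₁o, hs₀U₁, b₁, hb₁F, hbnd₁⟩ := hx.2 s₀ a haF (ε / 2) hε2
    obtain ⟨U₂, hU₂o, hs₀U₂, b₂, hb₂F, hbnd₂⟩ := hy.2 s₀ a haF (ε / 2) hε2
    have hψ₁ : Continuous fun s : idealSupp J => (inner ℂ (gν s.1) (b₁ s (gω s.1)) : ℂ) :=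
      inner_finRank_cont hΩ hb₁F hgνΩ hgωΩ
    have hψ₂ : Continuous fun s : idealSupp J => (inner ℂ (gν s.1) (b₂ s (gω s.1)) : ℂ) :=
      inner_finRank_cont hΩ hb₂F hgνΩ hgωΩ
    set Φ : idealSupp J → ℂ := fun s => (inner ℂ (gν s.1) (gν s.1) : ℂ) *
      ((inner ℂ (gν s.1) (b₁ s (gω s.1)) : ℂ) - (inner ℂ (gν s.1) (b₂ s (gω s.1)) : ℂ)) with hΦdef
    have hΦc : Continuous Φ :=
      ((hΩ.inner_cont hgνΩ hgνΩ).comp continuous_subtype_val).mul (hψ₁.sub hψ₂)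
    have haapp : ∀ (s : idealSupp J) (ξ : H s.1),
        a s ξ = (inner ℂ (gν s.1) ξ : ℂ) • gω s.1 := by
      intro s ξ
      have : a s = rankOneField (fun s : idealSupp J => gω s.1)
          (fun s : idealSupp J => gν s.1) s := by
        rw [hadef]
        exact Fin.sum_univ_one _
      rw [this]
      rfl
    have hΦeq : ∀ s : idealSupp J,
        Φ s = (inner ℂ (gν s.1) ((b₁ s - b₂ s) (a s (gν s.1))) : ℂ) := by
      intro s
      rw [haapp s (gν s.1), map_smul, inner_smul_right, ContinuousLinearMap.sub_apply,
        inner_sub_right]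
    have hDC : ∀ s : idealSupp J, s.1 ∈ idealSupp I → s ∈ U₁ → s ∈ U₂ →
        ‖Φ s‖ ≤ ε * ‖gν s.1‖ ^ 2 := by
      intro s hsI hsU₁ hsU₂
      have hxy' : x s = y s := by
        have hseq : s = (⟨s.1, hX hsI⟩ : idealSupp J) := Subtype.ext rfl
        rw [hseq]
        exact congrFun hxy ⟨s.1, hsI⟩
      have hb1op : ‖(x s - b₁ s) * a s‖ ≤ ε / 2 :=
        le_of_lt (lt_of_le_of_lt (le_add_of_nonneg_right (norm_nonneg _)) (hbnd₁ s hsU₁))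
      have hb2op : ‖(y s - b₂ s) * a s‖ ≤ ε / 2 :=
        le_of_lt (lt_of_le_of_lt (le_add_of_nonneg_right (norm_nonneg _)) (hbnd₂ s hsU₂))
      have hb12 : (b₁ s - b₂ s) (a s (gν s.1))
          = ((y s - b₂ s) * a s) (gν s.1) - ((x s - b₁ s) * a s) (gν s.1) := by
        simp only [ContinuousLinearMap.mul_apply, ContinuousLinearMap.sub_apply]
        rw [hxy']
        abel
      have hz : ‖(b₁ s - b₂ s) (a s (gν s.1))‖ ≤ ε * ‖gν s.1‖ := by
        rw [hb12]
        refine (norm_sub_le _ _).trans ?_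
        have e1 := ContinuousLinearMap.le_opNorm ((y s - b₂ s) * a s) (gν s.1)
        have e2 := ContinuousLinearMap.le_opNorm ((x s - b₁ s) * a s) (gν s.1)
        have f1 : ‖(y s - b₂ s) * a s‖ * ‖gν s.1‖ ≤ ε / 2 * ‖gν s.1‖ :=
          mul_le_mul_of_nonneg_right hb2op (norm_nonneg _)
        have f2 : ‖(x s - b₁ s) * a s‖ * ‖gν s.1‖ ≤ ε / 2 * ‖gν s.1‖ :=
          mul_le_mul_of_nonneg_right hb1op (norm_nonneg _)
        linarith
      rw [hΦeq s]
      calc ‖(inner ℂ (gν s.1) ((b₁ s - b₂ s) (a s (gν s.1))) : ℂ)‖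
          ≤ ‖gν s.1‖ * ‖(b₁ s - b₂ s) (a s (gν s.1))‖ := norm_inner_le_norm _ _
        _ ≤ ‖gν s.1‖ * (ε * ‖gν s.1‖) :=
            mul_le_mul_of_nonneg_left hz (norm_nonneg _)
        _ = ε * ‖gν s.1‖ ^ 2 := by ring
    have hclos : s₀ ∈ closure {s : idealSupp J |
        (s.1 ∈ idealSupp I ∧ s ∈ U₁ ∧ s ∈ U₂)} := by
      rw [mem_closure_iff]
      intro o ho hs₀o
      obtain ⟨Wo, hWoOpen, hWoeq⟩ := isOpen_induced_iff.1 (ho.inter (hU₁o.inter hU₂o))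
      have hs₀Wo : s₀.1 ∈ Wo := by
        have hmem : s₀ ∈ o ∩ (U₁ ∩ U₂) := ⟨hs₀o, hs₀U₁, hs₀U₂⟩
        rw [← hWoeq] at hmem
        exact hmem
      obtain ⟨t₁, ht₁Wo, ht₁I⟩ := mem_closure_iff.1 hden Wo hWoOpen hs₀Wo
      have hmem : (⟨t₁, hX ht₁I⟩ : idealSupp J) ∈ Subtype.val ⁻¹' Wo := ht₁Wo
      rw [hWoeq] at hmem
      exact ⟨⟨t₁, hX ht₁I⟩, hmem.1, ht₁I, hmem.2⟩
    have hΦs₀ : ‖Φ s₀‖ ≤ ε * ‖gν s₀.1‖ ^ 2 := by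
      have hCc : IsClosed {s : idealSupp J | ‖Φ s‖ ≤ ε * ‖gν s.1‖ ^ 2} :=
        isClosed_le hΦc.norm (continuous_const.mul
          (((hΩ.norm_continuous _ hgνΩ).comp continuous_subtype_val).pow 2))
      exact closure_minimal (fun s hs => hDC s hs.1 hs.2.1 hs.2.2) hCc hclos
    have hg1 : g s₀.1 = 1 := hgW s₀.1 hs₀W
    have hgνs₀ : gν s₀.1 = w := by rw [hgνdef]; simp [hg1, hνeq]
    have hgωs₀ : gω s₀.1 = v := by rw [hgωdef]; simp [hg1, hωeq]
    have haapp₀ : a s₀ (gν s₀.1) = (inner ℂ w w : ℂ) • v := by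
      rw [haapp s₀ (gν s₀.1), hgνs₀, hgωs₀]
    have hval : (inner ℂ (gν s₀.1) ((x s₀ - y s₀) (a s₀ (gν s₀.1))) : ℂ)
        = (inner ℂ w w : ℂ) * (inner ℂ w w : ℂ) := by
      rw [haapp₀, map_smul, inner_smul_right, hgνs₀, ContinuousLinearMap.sub_apply, ← hwdef]
    have hsplit : (x s₀ - y s₀) (a s₀ (gν s₀.1))
        = ((x s₀ - b₁ s₀) * a s₀) (gν s₀.1) + (b₁ s₀ - b₂ s₀) (a s₀ (gν s₀.1))
          - ((y s₀ - b₂ s₀) * a s₀) (gν s₀.1) := by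
      simp only [ContinuousLinearMap.mul_apply, ContinuousLinearMap.sub_apply]
      abel
    have hb1op : ‖(x s₀ - b₁ s₀) * a s₀‖ ≤ ε / 2 :=
      le_of_lt (lt_of_le_of_lt (le_add_of_nonneg_right (norm_nonneg _)) (hbnd₁ s₀ hs₀U₁))
    have hb2op : ‖(y s₀ - b₂ s₀) * a s₀‖ ≤ ε / 2 :=
      le_of_lt (lt_of_le_of_lt (le_add_of_nonneg_right (norm_nonneg _)) (hbnd₂ s₀ hs₀U₂))
    have hT1 : ‖(inner ℂ (gν s₀.1) (((x s₀ - b₁ s₀) * a s₀) (gν s₀.1)) : ℂ)‖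
        ≤ ε / 2 * ‖w‖ ^ 2 := by
      refine (norm_inner_le_norm _ _).trans ?_
      have e1 := ContinuousLinearMap.le_opNorm ((x s₀ - b₁ s₀) * a s₀) (gν s₀.1)
      have e2 : ‖((x s₀ - b₁ s₀) * a s₀) (gν s₀.1)‖ ≤ ε / 2 * ‖gν s₀.1‖ :=
        e1.trans (mul_le_mul_of_nonneg_right hb1op (norm_nonneg _))
      calc ‖gν s₀.1‖ * ‖((x s₀ - b₁ s₀) * a s₀) (gν s₀.1)‖
          ≤ ‖gν s₀.1‖ * (ε / 2 * ‖gν s₀.1‖) :=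
            mul_le_mul_of_nonneg_left e2 (norm_nonneg _)
        _ = ε / 2 * ‖w‖ ^ 2 := by rw [hgνs₀]; ring
    have hT3 : ‖(inner ℂ (gν s₀.1) (((y s₀ - b₂ s₀) * a s₀) (gν s₀.1)) : ℂ)‖
        ≤ ε / 2 * ‖w‖ ^ 2 := by
      refine (norm_inner_le_norm _ _).trans ?_
      have e1 := ContinuousLinearMap.le_opNorm ((y s₀ - b₂ s₀) * a s₀) (gν s₀.1)
      have e2 : ‖((y s₀ - b₂ s₀) * a s₀) (gν s₀.1)‖ ≤ ε / 2 * ‖gν s₀.1‖ :=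
        e1.trans (mul_le_mul_of_nonneg_right hb2op (norm_nonneg _))
      calc ‖gν s₀.1‖ * ‖((y s₀ - b₂ s₀) * a s₀) (gν s₀.1)‖
          ≤ ‖gν s₀.1‖ * (ε / 2 * ‖gν s₀.1‖) :=
            mul_le_mul_of_nonneg_left e2 (norm_nonneg _)
        _ = ε / 2 * ‖w‖ ^ 2 := by rw [hgνs₀]; ring
    have hT2 : ‖(inner ℂ (gν s₀.1) ((b₁ s₀ - b₂ s₀) (a s₀ (gν s₀.1))) : ℂ)‖
        ≤ ε * ‖w‖ ^ 2 := by
      rw [← hΦeq s₀]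
      refine hΦs₀.trans ?_
      rw [hgνs₀]
    have htotal : ‖(inner ℂ w w : ℂ) * (inner ℂ w w : ℂ)‖ ≤ 2 * ε * ‖w‖ ^ 2 := by
      rw [← hval, hsplit, inner_sub_right, inner_add_right]
      calc ‖(inner ℂ (gν s₀.1) (((x s₀ - b₁ s₀) * a s₀) (gν s₀.1)) : ℂ)
            + (inner ℂ (gν s₀.1) ((b₁ s₀ - b₂ s₀) (a s₀ (gν s₀.1))) : ℂ)
            - (inner ℂ (gν s₀.1) (((y s₀ - b₂ s₀) * a s₀) (gν s₀.1)) : ℂ)‖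
          ≤ ‖(inner ℂ (gν s₀.1) (((x s₀ - b₁ s₀) * a s₀) (gν s₀.1)) : ℂ)
              + (inner ℂ (gν s₀.1) ((b₁ s₀ - b₂ s₀) (a s₀ (gν s₀.1))) : ℂ)‖
            + ‖(inner ℂ (gν s₀.1) (((y s₀ - b₂ s₀) * a s₀) (gν s₀.1)) : ℂ)‖ :=
            norm_sub_le _ _
        _ ≤ ‖(inner ℂ (gν s₀.1) (((x s₀ - b₁ s₀) * a s₀) (gν s₀.1)) : ℂ)‖
            + ‖(inner ℂ (gν s₀.1) ((b₁ s₀ - b₂ s₀) (a s₀ (gν s₀.1))) : ℂ)‖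
            + ‖(inner ℂ (gν s₀.1) (((y s₀ - b₂ s₀) * a s₀) (gν s₀.1)) : ℂ)‖ := by
            have := norm_add_le (inner ℂ (gν s₀.1) (((x s₀ - b₁ s₀) * a s₀) (gν s₀.1)) : ℂ)
              (inner ℂ (gν s₀.1) ((b₁ s₀ - b₂ s₀) (a s₀ (gν s₀.1))) : ℂ)
            linarith
        _ ≤ ε / 2 * ‖w‖ ^ 2 + ε * ‖w‖ ^ 2 + ε / 2 * ‖w‖ ^ 2 := by linarith
        _ = 2 * ε * ‖w‖ ^ 2 := by ring
    have hww : ‖(inner ℂ w w : ℂ) * (inner ℂ w w : ℂ)‖ = ‖w‖ ^ 2 * ‖w‖ ^ 2 := by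
      rw [norm_mul, inner_self_eq_norm_sq_to_K (𝕜 := ℂ)]
      simp [Complex.norm_real, sq_abs, abs_of_nonneg (norm_nonneg w)]
    rw [hww, hεdef] at htotal
    have h4 : 0 < ‖w‖ ^ 4 := by positivity
    ring_nf at htotal
    linarith
end

section
/- Let A be the Fell C*-algebra of a continuous Hilbert bundle over a locally compact Hausdorff space T and let I be an essential ideal of A. Let ν ∈ E^I be such that t ↦ ‖ν(t)‖ belongs to C₀(X^I), and let x be a bounded operator field on X^I that is strictly continuous with respect to F((Ω^I|_{X^I})₀) (i.e. x represents an element of M(I)). Then there exists ω ∈ Ω^I such that ω(t) = x(t)ν(t) for every t ∈ X^I and ω(t) = 0 for every t ∈ βX^I ∖ X^I. -/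
noncomputable section AuxLemmas

variable {B : Type*} [TopologicalSpace B] {K : B → Type*}
  [∀ u, NormedAddCommGroup (K u)] [∀ u, InnerProductSpace ℂ (K u)]

lemma locUnifApprox_mem {S : Set (∀ u, K u)} {a : ∀ u, K u} (ha : a ∈ S) :
    LocUnifApprox S a := fun _t₀ ε hε =>
  ⟨Set.univ, isOpen_univ, trivial, a, ha, fun t _ => by simpa using hε⟩

lemma locUnifApprox_add {S : Set (∀ u, K u)}
    (hS : ∀ a ∈ S, ∀ b ∈ S, (fun u => a u + b u) ∈ S)
    {μ₁ μ₂ : ∀ u, K u} (h₁ : LocUnifApprox S μ₁) (h₂ : LocUnifApprox S μ₂) :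
    LocUnifApprox S (fun u => μ₁ u + μ₂ u) := by
  intro t₀ ε hε
  obtain ⟨U₁, hU₁, ht₁, a, ha, hd₁⟩ := h₁ t₀ (ε/2) (by linarith)
  obtain ⟨U₂, hU₂, ht₂, b, hb, hd₂⟩ := h₂ t₀ (ε/2) (by linarith)
  refine ⟨U₁ ∩ U₂, hU₁.inter hU₂, ⟨ht₁, ht₂⟩, fun u => a u + b u, hS a ha b hb,
    fun t ht => ?_⟩
  have h3 : a t + b t - (μ₁ t + μ₂ t) = (a t - μ₁ t) + (b t - μ₂ t) := by abel
  calc ‖a t + b t - (μ₁ t + μ₂ t)‖ ≤ ‖a t - μ₁ t‖ + ‖b t - μ₂ t‖ := by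
        rw [h3]; exact norm_add_le _ _
    _ < ε := by have := hd₁ t ht.1; have := hd₂ t ht.2; linarith

lemma locUnifApprox_sum {S : Set (∀ u, K u)}
    (hadd : ∀ a ∈ S, ∀ b ∈ S, (fun u => a u + b u) ∈ S)
    (h0 : (fun u => (0 : K u)) ∈ S) :
    ∀ {n : ℕ} (m : Fin n → ∀ u, K u), (∀ i, LocUnifApprox S (m i)) →
      LocUnifApprox S (fun u => ∑ i, m i u) := by
  intro n
  induction n with
  | zero =>
    intro m _
    have h : (fun u => ∑ i : Fin 0, m i u) = fun u => (0 : K u) := by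
      funext u; simp
    rw [h]; exact locUnifApprox_mem h0
  | succ k ih =>
    intro m hm
    have h : (fun u => ∑ i, m i u)
        = fun u => (∑ i : Fin k, m i.castSucc u) + m (Fin.last k) u := by
      funext u; rw [Fin.sum_univ_castSucc]
    rw [h]
    exact locUnifApprox_add hadd (ih _ fun i => hm _) (hm _)

lemma locUnifApprox_smul {S : Set (∀ u, K u)}
    (hS : ∀ (c : ℂ), ∀ a ∈ S, (fun u => c • a u) ∈ S)
    (hSn : ∀ a ∈ S, Continuous fun u => ‖a u‖)
    {f : B → ℂ} (hf : Continuous f) {μ : ∀ u, K u} (hμ : LocUnifApprox S μ) :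
    LocUnifApprox S (fun u => f u • μ u) := by
  intro u₀ ε hε
  have hden : (0:ℝ) < ‖μ u₀‖ + ‖f u₀‖ + 4 := by positivity
  set δ := min 1 (ε / (‖μ u₀‖ + ‖f u₀‖ + 4)) with hδdef
  have hδpos : 0 < δ := lt_min one_pos (by positivity)
  have hδ1 : δ ≤ 1 := min_le_left _ _
  have hδ2 : δ * (‖μ u₀‖ + ‖f u₀‖ + 4) ≤ ε := by
    have := min_le_right 1 (ε / (‖μ u₀‖ + ‖f u₀‖ + 4))
    calc δ * (‖μ u₀‖ + ‖f u₀‖ + 4)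
        ≤ (ε / (‖μ u₀‖ + ‖f u₀‖ + 4)) * (‖μ u₀‖ + ‖f u₀‖ + 4) := by
          apply mul_le_mul_of_nonneg_right _ hden.le
          simpa [hδdef] using this
      _ = ε := div_mul_cancel₀ _ (ne_of_gt hden)
  obtain ⟨U₁, hU₁, hu₁, a, ha, hda⟩ := hμ u₀ δ hδpos
  have hna : Continuous fun u => ‖a u‖ := hSn a ha
  have hU₂ : IsOpen {u | ‖a u‖ < ‖a u₀‖ + 1} := isOpen_lt hna continuous_const
  have hU₃ : IsOpen {u | ‖f u - f u₀‖ < δ} :=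
    isOpen_lt ((hf.sub continuous_const).norm) continuous_const
  refine ⟨U₁ ∩ ({u | ‖a u‖ < ‖a u₀‖ + 1} ∩ {u | ‖f u - f u₀‖ < δ}),
    hU₁.inter (hU₂.inter hU₃),
    ⟨hu₁, by simp, by simpa using hδpos⟩,
    fun u => f u₀ • a u, hS _ a ha, fun u hu => ?_⟩
  obtain ⟨huU₁, hu2, hu3⟩ := hu
  have h1 : ‖a u - μ u‖ < δ := hda u huU₁
  have h4 : ‖a u₀‖ ≤ ‖μ u₀‖ + δ := by
    have := hda u₀ hu₁
    have := norm_sub_norm_le (a u₀) (μ u₀)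
    linarith
  have h5 : ‖f u‖ ≤ ‖f u₀‖ + δ := by
    have := norm_sub_norm_le (f u) (f u₀)
    have hu3' : ‖f u - f u₀‖ < δ := hu3
    linarith
  have hsplit : f u₀ • a u - f u • μ u
      = (f u₀ - f u) • a u + f u • (a u - μ u) := by
    rw [sub_smul, smul_sub]; abel
  have hu2' : ‖a u‖ < ‖a u₀‖ + 1 := hu2
  have hfn : ‖f u₀ - f u‖ < δ := by rwa [norm_sub_rev]
  calc ‖f u₀ • a u - f u • μ u‖
      ≤ ‖(f u₀ - f u) • a u‖ + ‖f u • (a u - μ u)‖ := by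
        rw [hsplit]; exact norm_add_le _ _
    _ = ‖f u₀ - f u‖ * ‖a u‖ + ‖f u‖ * ‖a u - μ u‖ := by
        rw [norm_smul, norm_smul]
    _ < ε := by
        nlinarith [norm_nonneg (a u), norm_nonneg (f u), norm_nonneg (a u - μ u),
          norm_nonneg (f u₀ - f u), norm_nonneg (μ u₀), norm_nonneg (f u₀)]

lemma locUnifApprox_inner_cont [CompactSpace B] {S : Set (∀ u, K u)}
    (hSi : ∀ a ∈ S, ∀ b ∈ S, Continuous fun u => (inner ℂ (a u) (b u) : ℂ))
    (hSn : ∀ a ∈ S, Continuous fun u => ‖a u‖)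
    {μ : ∀ u, K u} (hμ : LocUnifApprox S μ) {ν : ∀ u, K u} (hν : ν ∈ S) :
    Continuous fun u => (inner ℂ (μ u) (ν u) : ℂ) := by
  obtain ⟨M₀, hM₀⟩ := (isCompact_range (hSn ν hν)).bddAbove
  set M := max M₀ 0 with hMdef
  have hM : ∀ u, ‖ν u‖ ≤ M := fun u =>
    le_trans (hM₀ ⟨u, rfl⟩) (le_max_left _ _)
  have hM0 : 0 ≤ M := le_max_right _ _
  rw [continuous_iff_continuousAt]
  intro u₀
  rw [ContinuousAt, Metric.tendsto_nhds]
  intro ε hε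
  have hδpos : (0:ℝ) < ε / (4 * (M + 1)) := by positivity
  obtain ⟨U, hU, hu₀, a, ha, hda⟩ := hμ u₀ (ε / (4 * (M + 1))) hδpos
  have hg : Continuous fun u => (inner ℂ (a u) (ν u) : ℂ) := hSi a ha ν hν
  have e1 : ∀ᶠ u in nhds u₀, u ∈ U := hU.mem_nhds hu₀
  have e2 : ∀ᶠ u in nhds u₀,
      dist (inner ℂ (a u) (ν u) : ℂ) (inner ℂ (a u₀) (ν u₀) : ℂ) < ε / 2 :=
    Metric.tendsto_nhds.mp hg.continuousAt (ε/2) (by linarith)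
  filter_upwards [e1, e2] with u huU hud
  have key : ∀ w, w ∈ U →
      ‖(inner ℂ (μ w) (ν w) : ℂ) - inner ℂ (a w) (ν w)‖ ≤ ε / 4 := by
    intro w hw
    rw [← inner_sub_left]
    calc ‖(inner ℂ (μ w - a w) (ν w) : ℂ)‖ ≤ ‖μ w - a w‖ * ‖ν w‖ :=
          norm_inner_le_norm _ _
      _ ≤ (ε / (4 * (M + 1))) * (M + 1) := by
          apply mul_le_mul _ _ (norm_nonneg _) hδpos.le
          · rw [norm_sub_rev]; exact (hda w hw).le
          · exact le_trans (hM w) (by linarith)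
      _ = ε / 4 := by field_simp
  have h1 := key u huU
  have h2 := key u₀ hu₀
  rw [dist_eq_norm] at hud ⊢
  calc ‖(inner ℂ (μ u) (ν u) : ℂ) - inner ℂ (μ u₀) (ν u₀)‖
      ≤ ‖(inner ℂ (μ u) (ν u) : ℂ) - inner ℂ (a u) (ν u)‖
        + ‖(inner ℂ (a u) (ν u) : ℂ) - inner ℂ (a u₀) (ν u₀)‖
        + ‖(inner ℂ (a u₀) (ν u₀) : ℂ) - inner ℂ (μ u₀) (ν u₀)‖ := by
          have := norm_add₃_le (E := ℂ)
            (a := (inner ℂ (μ u) (ν u) : ℂ) - inner ℂ (a u) (ν u))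
            (b := (inner ℂ (a u) (ν u) : ℂ) - inner ℂ (a u₀) (ν u₀))
            (c := (inner ℂ (a u₀) (ν u₀) : ℂ) - inner ℂ (μ u₀) (ν u₀))
          simpa using this
    _ < ε := by
        have h2' : ‖(inner ℂ (a u₀) (ν u₀) : ℂ) - inner ℂ (μ u₀) (ν u₀)‖ ≤ ε / 4 := by
          rw [norm_sub_rev]; exact h2
        linarith

open Classical in
def extendByZero {A B : Type*} {K : B → Type*} [∀ u, Zero (K u)]
    (ι : A → B) (v : ∀ a, K (ι a)) : ∀ u, K u :=
  fun u => if h : ∃ a, ι a = u then h.choose_spec ▸ v h.choose else 0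

lemma extendByZero_apply {A B : Type*} {K : B → Type*} [∀ u, Zero (K u)]
    {ι : A → B} (hinj : Function.Injective ι) (v : ∀ a, K (ι a)) (a : A) :
    extendByZero ι v (ι a) = v a := by
  have h : ∃ a', ι a' = ι a := ⟨a, rfl⟩
  have ha : h.choose = a := hinj h.choose_spec
  simp only [extendByZero]
  rw [dif_pos h]
  have key : ∀ (a' : A) (p : ι a' = ι a), a' = a → (p ▸ v a' : K (ι a)) = v a := by
    intro a' p hq
    subst hq
    rfl
  exact key h.choose h.choose_spec ha

lemma extendByZero_of_not_mem {A B : Type*} {K : B → Type*} [∀ u, Zero (K u)]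
    (ι : A → B) (v : ∀ a, K (ι a)) (u : B) (hu : u ∉ Set.range ι) :
    extendByZero ι v u = 0 := by
  have h : ¬∃ a, ι a = u := by simpa [Set.mem_range] using hu
  simp only [extendByZero]
  rw [dif_neg h]

end AuxLemmas

/-- Lemma `*-str cont`.  Let `I` be an essential ideal of the
Fell algebra `A`, let `ν ∈ E^I` have pointwise norm in `C₀(X^I)`, and let `x`
be a bounded operator field on `X^I` strictly continuous w.r.t.
`F((Ω^I|_{X^I})₀)` (i.e. `x` represents an element of `M(I)`).  Then there is
`ω ∈ Ω^I` with `ω(t) = x(t)ν(t)` on `X^I` and `ω = 0` off `X^I`. -/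
theorem multiplier_applied_to_C0_field
    {T : Type} [TopologicalSpace T] [LocallyCompactSpace T] [T2Space T]
    {H : T → Type} [∀ t, NormedAddCommGroup (H t)] [∀ t, InnerProductSpace ℂ (H t)]
    [∀ t, CompleteSpace (H t)]
    (Ω : Set (∀ t, H t)) (hΩ : IsCtsHilbertBundle Ω)
    (I : Set (∀ t, H t →L[ℂ] H t))
    (hI : IsEssentialIdealOf (FellAlgebra Ω) I)
    {βX : Type} [TopologicalSpace βX] [CompactSpace βX] [T2Space βX]
    (ι : idealSupp I → βX) (hι : Topology.IsEmbedding ι) (hιdense : DenseRange ι)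
    {HI : βX → Type} [∀ u, NormedAddCommGroup (HI u)]
    [∀ u, InnerProductSpace ℂ (HI u)] [∀ u, CompleteSpace (HI u)]
    (bar : (∀ t, H t) → ∀ u, HI u)
    (hbar_add : ∀ ω ∈ boundedFields Ω, ∀ ν ∈ boundedFields Ω,
      bar (ω + ν) = bar ω + bar ν)
    (hbar_smul : ∀ (c : ℂ), ∀ ω ∈ boundedFields Ω, bar (c • ω) = c • bar ω)
    (hbar_inner_cont : ∀ ω ∈ boundedFields Ω, ∀ ν ∈ boundedFields Ω,
      Continuous fun u => (inner ℂ (bar ω u) (bar ν u) : ℂ))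
    (hbar_dense : ∀ (u : βX) (v : HI u) (ε : ℝ), 0 < ε →
      ∃ ω ∈ boundedFields Ω, ‖bar ω u - v‖ < ε)
    -- `ν ∈ E^I` with pointwise norm in `C₀(X^I)`:
    (ω₀ : ∀ t, H t) (hω₀ : ω₀ ∈ boundedFields Ω)
    (hν_c0 : Filter.Tendsto (fun x : idealSupp I => ‖bar ω₀ (ι x)‖)
      (Filter.cocompact (idealSupp I)) (nhds 0))
    -- `x ∈ M(I)`: a bounded operator field on `X^I`, strictly continuous with
    -- respect to `F((Ω^I|_{X^I})₀)`:
    (x : ∀ t : idealSupp I, HI (ι t) →L[ℂ] HI (ι t))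
    (hx : x ∈ MultSet (finRankFields
      {ω' : ∀ t : idealSupp I, HI (ι t) |
        ∃ μ ∈ {μ : ∀ u, HI u | LocUnifApprox (bar '' boundedFields Ω) μ},
          (∀ t : idealSupp I, ω' t = μ (ι t)) ∧
          Filter.Tendsto (fun t : idealSupp I => ‖μ (ι t)‖)
            (Filter.cocompact (idealSupp I)) (nhds 0)})) :
    ∃ ω ∈ {μ : ∀ u, HI u | LocUnifApprox (bar '' boundedFields Ω) μ},
      (∀ t : idealSupp I, ω (ι t) = x t (bar ω₀ (ι t))) ∧
      (∀ u : βX, u ∉ Set.range ι → ω u = 0) := by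
  classical
  -- Closure properties of `S0 = bar '' boundedFields Ω`.
  have hS0add : ∀ a ∈ bar '' boundedFields Ω, ∀ b ∈ bar '' boundedFields Ω,
      (fun u => a u + b u) ∈ bar '' boundedFields Ω := by
    rintro _ ⟨η₁, hη₁, rfl⟩ _ ⟨η₂, hη₂, rfl⟩
    have hmem : η₁ + η₂ ∈ boundedFields Ω := by
      obtain ⟨M₁, hM₁⟩ := hη₁.2
      obtain ⟨M₂, hM₂⟩ := hη₂.2
      refine ⟨hΩ.add_mem _ hη₁.1 _ hη₂.1, M₁ + M₂, fun t => ?_⟩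
      exact (norm_add_le _ _).trans (add_le_add (hM₁ t) (hM₂ t))
    exact ⟨η₁ + η₂, hmem, by rw [hbar_add _ hη₁ _ hη₂]; rfl⟩
  have hS0smul : ∀ (c : ℂ), ∀ a ∈ bar '' boundedFields Ω,
      (fun u => c • a u) ∈ bar '' boundedFields Ω := by
    rintro c _ ⟨η, hη, rfl⟩
    have hmem : c • η ∈ boundedFields Ω := by
      obtain ⟨M, hM⟩ := hη.2
      refine ⟨hΩ.smul_mem (ContinuousMap.const T c) η hη.1, ‖c‖ * M, fun t => ?_⟩
      rw [Pi.smul_apply, norm_smul]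
      exact mul_le_mul_of_nonneg_left (hM t) (norm_nonneg c)
    exact ⟨c • η, hmem, by rw [hbar_smul c η hη]; rfl⟩
  have hS0norm : ∀ a ∈ bar '' boundedFields Ω, Continuous fun u => ‖a u‖ := by
    rintro _ ⟨η, hη, rfl⟩
    have h := hbar_inner_cont η hη η hη
    have heq : (fun u => ‖bar η u‖)
        = fun u => Real.sqrt ‖(inner ℂ (bar η u) (bar η u) : ℂ)‖ := by
      funext u
      rw [inner_self_eq_norm_sq_to_K, norm_pow, RCLike.norm_ofReal, abs_norm,
        Real.sqrt_sq (norm_nonneg _)]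
    rw [heq]
    exact Real.continuous_sqrt.comp h.norm
  have hS0inner : ∀ a ∈ bar '' boundedFields Ω, ∀ b ∈ bar '' boundedFields Ω,
      Continuous fun u => (inner ℂ (a u) (b u) : ℂ) := by
    rintro _ ⟨η₁, hη₁, rfl⟩ _ ⟨η₂, hη₂, rfl⟩
    exact hbar_inner_cont _ hη₁ _ hη₂
  have hzb : (0:ℂ) • ω₀ ∈ boundedFields Ω := by
    refine ⟨hΩ.smul_mem (ContinuousMap.const T 0) ω₀ hω₀.1, 0, fun t => ?_⟩
    rw [Pi.smul_apply, zero_smul, norm_zero]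
  have hS0zero : (fun u => (0 : HI u)) ∈ bar '' boundedFields Ω := by
    refine ⟨(0:ℂ) • ω₀, hzb, ?_⟩
    rw [hbar_smul 0 ω₀ hω₀]
    funext u
    rw [Pi.smul_apply, zero_smul]
  have hbarS0 : bar ω₀ ∈ bar '' boundedFields Ω := ⟨ω₀, hω₀, rfl⟩
  have hNcont : Continuous fun u => ‖bar ω₀ u‖ := hS0norm _ hbarS0
  -- `bar ω₀` vanishes off the range of `ι`.
  have hvanish : ∀ u : βX, u ∉ Set.range ι → bar ω₀ u = 0 := by
    intro u hu
    by_contra hne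
    have hc : 0 < ‖bar ω₀ u‖ := norm_pos_iff.mpr hne
    have hev : ∀ᶠ t in Filter.cocompact (idealSupp I),
        ‖bar ω₀ (ι t)‖ < ‖bar ω₀ u‖ / 2 := by
      have h := Metric.tendsto_nhds.mp hν_c0 (‖bar ω₀ u‖ / 2) (by linarith)
      filter_upwards [h] with t ht
      rwa [dist_zero_right, norm_norm] at ht
    obtain ⟨K, hK, hKsub⟩ := Filter.mem_cocompact.mp hev
    have hKim : IsClosed (ι '' K) := (hK.image hι.continuous).isClosed
    have hVopen : IsOpen ({w | ‖bar ω₀ u‖ / 2 < ‖bar ω₀ w‖} ∩ (ι '' K)ᶜ) :=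
      (isOpen_lt continuous_const hNcont).inter hKim.isOpen_compl
    have huV : u ∈ {w | ‖bar ω₀ u‖ / 2 < ‖bar ω₀ w‖} ∩ (ι '' K)ᶜ := by
      refine ⟨half_lt_self hc, fun hmem => hu ?_⟩
      obtain ⟨t, _, ht⟩ := hmem
      exact ⟨t, ht⟩
    obtain ⟨t, htV⟩ := hιdense.exists_mem_open hVopen ⟨u, huV⟩
    have h1 : ‖bar ω₀ u‖ / 2 < ‖bar ω₀ (ι t)‖ := htV.1
    have h2 : t ∈ Kᶜ := fun hk => htV.2 ⟨t, hk, rfl⟩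
    have h3 : ‖bar ω₀ (ι t)‖ < ‖bar ω₀ u‖ / 2 := hKsub h2
    linarith
  have hmemrange : ∀ u : βX, bar ω₀ u ≠ 0 → u ∈ Set.range ι := by
    intro u h
    by_contra hr
    exact h (hvanish u hr)
  refine ⟨extendByZero ι (fun t => x t (bar ω₀ (ι t))), ?_,
    fun t => extendByZero_apply hι.injective _ t,
    fun u hu => extendByZero_of_not_mem ι _ u hu⟩
  -- Membership in `Ω^I`, i.e. local uniform approximation by `E^I`.
  intro u₀ ε hε
  obtain ⟨C₀, hC₀⟩ := hx.1
  set C := max C₀ 0 with hCdef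
  have hC : ∀ t, ‖x t‖ ≤ C := fun t => le_trans (hC₀ t) (le_max_left _ _)
  have hC0 : (0:ℝ) ≤ C := le_max_right _ _
  have hD : (0:ℝ) < ε / (2 * (C + 1)) := by positivity
  by_cases hcase : ‖bar ω₀ u₀‖ < ε / (2 * (C + 1))
  · -- Case A: the norm of `ν` is small at `u₀`; approximate by the zero field.
    refine ⟨{u | ‖bar ω₀ u‖ < ε / (2 * (C + 1))},
      isOpen_lt hNcont continuous_const, hcase,
      bar ((0:ℂ) • ω₀), ⟨(0:ℂ) • ω₀, hzb, rfl⟩, fun u hu => ?_⟩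
    have hz : bar ((0:ℂ) • ω₀) u = 0 := by
      rw [hbar_smul 0 ω₀ hω₀, Pi.smul_apply, zero_smul]
    rw [hz, zero_sub, norm_neg]
    have hu' : ‖bar ω₀ u‖ < ε / (2 * (C + 1)) := hu
    have h3 : ε / (2 * (C + 1)) * (2 * (C + 1)) = ε :=
      div_mul_cancel₀ _ (by positivity)
    by_cases hur : u ∈ Set.range ι
    · obtain ⟨t, rfl⟩ := hur
      rw [extendByZero_apply hι.injective]
      have h1 : ‖x t (bar ω₀ (ι t))‖ ≤ C * ‖bar ω₀ (ι t)‖ :=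
        le_trans ((x t).le_opNorm _)
          (mul_le_mul_of_nonneg_right (hC t) (norm_nonneg _))
      have h4 : C * ‖bar ω₀ (ι t)‖ ≤ C * (ε / (2 * (C + 1))) :=
        mul_le_mul_of_nonneg_left hu'.le hC0
      have h5 : C * (ε / (2 * (C + 1))) < ε := by
        nlinarith [mul_pos hD (show (0:ℝ) < C + 2 by linarith)]
      linarith
    · rw [extendByZero_of_not_mem ι _ u hur]
      simpa using hε
  · -- Case B: use strict continuity of `x`.
    push_neg at hcase
    have hcpos : 0 < ‖bar ω₀ u₀‖ := lt_of_lt_of_le hD hcase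
    have hne : bar ω₀ u₀ ≠ 0 := by
      intro h
      rw [h, norm_zero] at hcpos
      exact lt_irrefl _ hcpos
    obtain ⟨t₀, ht₀⟩ := hmemrange u₀ hne
    have hε₁ : 0 < ε * ‖bar ω₀ u₀‖ / 8 := by
      apply div_pos (mul_pos hε hcpos)
      norm_num
    set ν' : ∀ t : idealSupp I, HI (ι t) := fun t' => bar ω₀ (ι t') with hν'def
    obtain ⟨U, hUopen, ht₀U, b, hbF, hUb⟩ :=
      hx.2 t₀ (fun t => ∑ _i : Fin 1, rankOneField ν' ν' t)
        ⟨1, fun _ => ν', fun _ => ν',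
          fun _ => ⟨bar ω₀, locUnifApprox_mem hbarS0, fun _ => rfl, hν_c0⟩,
          fun _ => ⟨bar ω₀, locUnifApprox_mem hbarS0, fun _ => rfl, hν_c0⟩, rfl⟩
        (ε * ‖bar ω₀ u₀‖ / 8) hε₁
    obtain ⟨n, ωF, νF, hωF, hνF, hbeq⟩ := hbF
    choose μs hμsP hμseq hμsc0 using hωF
    choose μs' hμs'P hμs'eq hμs'c0 using hνF
    have hg : LocUnifApprox (bar '' boundedFields Ω)
        (fun u => ∑ i, (inner ℂ (μs' i u) (bar ω₀ u) : ℂ) • μs i u) :=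
      locUnifApprox_sum hS0add hS0zero
        (fun i => fun u => (inner ℂ (μs' i u) (bar ω₀ u) : ℂ) • μs i u)
        (fun i => locUnifApprox_smul hS0smul hS0norm
          (locUnifApprox_inner_cont hS0inner hS0norm (hμs'P i) hbarS0) (hμsP i))
    obtain ⟨U₂, hU₂open, hu₀U₂, ω', hω'S0, hω'close⟩ := hg u₀ (ε/2) (by linarith)
    obtain ⟨V, hVopen, hVpre⟩ := hι.toIsInducing.isOpen_iff.mp hUopen
    have hu₀V : u₀ ∈ V := by
      rw [← hVpre] at ht₀U
      rw [← ht₀]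
      exact ht₀U
    refine ⟨U₂ ∩ V ∩ {u | ‖bar ω₀ u₀‖ / 2 < ‖bar ω₀ u‖},
      (hU₂open.inter hVopen).inter (isOpen_lt continuous_const hNcont),
      ⟨⟨hu₀U₂, hu₀V⟩, half_lt_self hcpos⟩, ω', hω'S0, fun u hu => ?_⟩
    obtain ⟨⟨huU₂, huV⟩, huN⟩ := hu
    have huN' : ‖bar ω₀ u₀‖ / 2 < ‖bar ω₀ u‖ := huN
    have hune : bar ω₀ u ≠ 0 := by
      intro h
      rw [h, norm_zero] at huN'
      linarith
    obtain ⟨t, rfl⟩ := hmemrange u hune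
    have htU : t ∈ U := by
      rw [← hVpre]
      exact huV
    rw [extendByZero_apply hι.injective]
    have hUb' := hUb t htU
    simp only [] at hUb'
    -- The norm estimate from strict continuity.
    have hat : (∑ _i : Fin 1, rankOneField ν' ν' t) (ν' t)
        = (inner ℂ (ν' t) (ν' t) : ℂ) • ν' t := by
      rw [Fin.sum_univ_one,
        show rankOneField ν' ν' t = (innerSL ℂ (ν' t)).smulRight (ν' t) from rfl,
        ContinuousLinearMap.smulRight_apply, innerSL_apply_apply]
    have hmul : ((x t - b t) * (∑ _i : Fin 1, rankOneField ν' ν' t)) (ν' t)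
        = (inner ℂ (ν' t) (ν' t) : ℂ) • ((x t - b t) (ν' t)) := by
      rw [ContinuousLinearMap.mul_apply, hat, map_smul]
    have hinn : ‖(inner ℂ (ν' t) (ν' t) : ℂ)‖ = ‖ν' t‖ ^ 2 := by
      rw [inner_self_eq_norm_sq_to_K, norm_pow, RCLike.norm_ofReal, abs_norm]
    have hnorm1 : ‖((x t - b t) * (∑ _i : Fin 1, rankOneField ν' ν' t)) (ν' t)‖
        = ‖ν' t‖ ^ 2 * ‖(x t - b t) (ν' t)‖ := by
      rw [hmul, norm_smul, hinn]
    have hxb : ‖(x t - b t) * (∑ _i : Fin 1, rankOneField ν' ν' t)‖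
        < ε * ‖bar ω₀ u₀‖ / 8 := by
      have h0 := norm_nonneg ((∑ _i : Fin 1, rankOneField ν' ν' t) * (x t - b t))
      linarith
    have hd : ‖(x t - b t) (ν' t)‖ ≤ ε / 4 := by
      have h1 := ContinuousLinearMap.le_opNorm
        ((x t - b t) * (∑ _i : Fin 1, rankOneField ν' ν' t)) (ν' t)
      rw [hnorm1] at h1
      have hr : ‖bar ω₀ u₀‖ / 2 < ‖ν' t‖ := huN'
      have h2 : ‖(x t - b t) * (∑ _i : Fin 1, rankOneField ν' ν' t)‖ * ‖ν' t‖
          ≤ (ε * ‖bar ω₀ u₀‖ / 8) * ‖ν' t‖ :=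
        mul_le_mul_of_nonneg_right hxb.le (norm_nonneg _)
      have hrpos : 0 < ‖ν' t‖ := lt_trans (by positivity) hr
      have h3 : (‖ν' t‖ * ‖(x t - b t) (ν' t)‖) * ‖ν' t‖
          ≤ (ε * ‖bar ω₀ u₀‖ / 8) * ‖ν' t‖ := by
        calc (‖ν' t‖ * ‖(x t - b t) (ν' t)‖) * ‖ν' t‖
            = ‖ν' t‖ ^ 2 * ‖(x t - b t) (ν' t)‖ := by ring
          _ ≤ _ := le_trans h1 h2
      have h4 : ‖ν' t‖ * ‖(x t - b t) (ν' t)‖ ≤ ε * ‖bar ω₀ u₀‖ / 8 :=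
        le_of_mul_le_mul_right h3 hrpos
      have h5 : ‖(x t - b t) (ν' t)‖ * (‖bar ω₀ u₀‖ / 2)
          ≤ ‖(x t - b t) (ν' t)‖ * ‖ν' t‖ :=
        mul_le_mul_of_nonneg_left hr.le (norm_nonneg _)
      nlinarith [h4, h5, hcpos]
    -- The value of `b` at `ν'`.
    have hgb : b t (ν' t)
        = ∑ i, (inner ℂ (μs' i (ι t)) (bar ω₀ (ι t)) : ℂ) • μs i (ι t) := by
      rw [hbeq]
      simp only [ContinuousLinearMap.sum_apply]
      refine Finset.sum_congr rfl fun i _ => ?_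
      rw [show rankOneField (ωF i) (νF i) t
          = (innerSL ℂ (νF i t)).smulRight (ωF i t) from rfl,
        ContinuousLinearMap.smulRight_apply, innerSL_apply_apply,
        hμseq i t, hμs'eq i t]
    have hclose : ‖ω' (ι t)
        - ∑ i, (inner ℂ (μs' i (ι t)) (bar ω₀ (ι t)) : ℂ) • μs i (ι t)‖ < ε / 2 := by
      have h := hω'close (ι t) huU₂
      simpa using h
    have h2 : ‖(∑ i, (inner ℂ (μs' i (ι t)) (bar ω₀ (ι t)) : ℂ) • μs i (ι t))
        - x t (bar ω₀ (ι t))‖ ≤ ε / 4 := by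
      rw [← hgb, norm_sub_rev]
      have heq : x t (bar ω₀ (ι t)) - b t (ν' t) = (x t - b t) (ν' t) := by
        rw [ContinuousLinearMap.sub_apply]
      rw [heq]
      exact hd
    calc ‖ω' (ι t) - x t (bar ω₀ (ι t))‖
        ≤ ‖ω' (ι t)
            - ∑ i, (inner ℂ (μs' i (ι t)) (bar ω₀ (ι t)) : ℂ) • μs i (ι t)‖
          + ‖(∑ i, (inner ℂ (μs' i (ι t)) (bar ω₀ (ι t)) : ℂ) • μs i (ι t))
            - x t (bar ω₀ (ι t))‖ := by
          have h := norm_add_le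
            (ω' (ι t) - ∑ i, (inner ℂ (μs' i (ι t)) (bar ω₀ (ι t)) : ℂ) • μs i (ι t))
            ((∑ i, (inner ℂ (μs' i (ι t)) (bar ω₀ (ι t)) : ℂ) • μs i (ι t))
              - x t (bar ω₀ (ι t)))
          rwa [sub_add_sub_cancel] at h
      _ < ε := by linarith
end
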